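/- arXiv:2311.15910 — 3 statements merged into one kernel-verified Lean document; each statement's English description precedes it below -/
import Mathlib

section
/- Let n ≥ 2 be an integer, K a field, and R_n the rose graph with n petals. The canonical group homomorphism T : U(L_K(R_n)) → Inn(L_K(R_n)), u ↦ τ_u, from the group of units to the group of inner automorphisms is surjective with kernel K* · 1_{L_K(R_n)}, the group of nonzero scalar multiples of the identity. Consequently, the center of the group U(L_K(R_n)) equals K* · 1_{L_K(R_n)}. -/
/-- Generators of the Leavitt path algebra of the rose with `n` petals:
the edges `e_1, …, e_n` and the ghost edges `e_1*, …, e_n*` (the single vertex `v` is the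
identity `1`). -/
inductive RGen (n : ℕ) : Type
  | e : Fin n → RGen n
  | g : Fin n → RGen n

/-- The defining relations of `L_K(R_n)`: `e_i* e_j = δ_{ij} v` and `Σ_i e_i e_i* = v`,
where `v = 1`. -/
inductive RoseRel (K : Type) [Field K] (n : ℕ) :
    FreeAlgebra K (RGen n) → FreeAlgebra K (RGen n) → Prop
  | ghostEdgeSame (i : Fin n) :
      RoseRel K n (FreeAlgebra.ι K (RGen.g i) * FreeAlgebra.ι K (RGen.e i)) 1
  | ghostEdgeNe (i j : Fin n) (h : i ≠ j) :
      RoseRel K n (FreeAlgebra.ι K (RGen.g i) * FreeAlgebra.ι K (RGen.e j)) 0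
  | ck2 :
      RoseRel K n (∑ i : Fin n, FreeAlgebra.ι K (RGen.e i) * FreeAlgebra.ι K (RGen.g i)) 1

/-- The Leavitt path algebra `L_K(R_n)` of the rose with `n` petals. -/
abbrev LRose (K : Type) [Field K] (n : ℕ) : Type := RingQuot (RoseRel K n)

/-- The edge `e_i` as an element of `L_K(R_n)`. -/
noncomputable def ee (K : Type) [Field K] (n : ℕ) (i : Fin n) : LRose K n :=
  RingQuot.mkAlgHom K (RoseRel K n) (FreeAlgebra.ι K (RGen.e i))

/-- The ghost edge `e_i*` as an element of `L_K(R_n)`. -/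
noncomputable def gg (K : Type) [Field K] (n : ℕ) (i : Fin n) : LRose K n :=
  RingQuot.mkAlgHom K (RoseRel K n) (FreeAlgebra.ι K (RGen.g i))

/-- The degree `d` component of the ℤ-grading of `L_K(R_n)`: the `K`-span of the
elements `p q*` with `|p| - |q| = d`. -/
noncomputable def rComponent (K : Type) [Field K] (n : ℕ) (d : ℤ) :
    Submodule K (LRose K n) :=
  Submodule.span K {x : LRose K n | ∃ p q : List (Fin n),
    (p.length : ℤ) - (q.length : ℤ) = d ∧
    x = (p.map (ee K n)).prod * (q.reverse.map (gg K n)).prod}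

/-- A map is graded when it preserves every homogeneous component. -/
def RGraded (K : Type) [Field K] (n : ℕ) (f : LRose K n → LRose K n) : Prop :=
  ∀ d : ℤ, ∀ x ∈ rComponent K n d, f x ∈ rComponent K n d

/-- The defining property of the endomorphism `φ_P` of `L_K(R_n)` attached to a matrix
`P` with inverse `P'`: it sends `e_i ↦ Σ_k e_k p_{k i}` and `e_i* ↦ Σ_k p'_{i k} e_k*`
(and `v = 1 ↦ 1` automatically). -/
def RPhiProps (K : Type) [Field K] (n : ℕ) (P P' : Matrix (Fin n) (Fin n) (LRose K n))
    (φ : LRose K n →ₐ[K] LRose K n) : Prop :=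
  (∀ i, φ (ee K n i) = ∑ k, ee K n k * P k i) ∧
  (∀ i, φ (gg K n i) = ∑ k, P' i k * gg K n k)


section RoseAux

variable (K : Type) [Field K] (n : ℕ)

/-- String of real edges. -/
noncomputable def rEstr (p : List (Fin n)) : LRose K n := (p.map (ee K n)).prod

/-- String of ghost edges (reversed). -/
noncomputable def rGstr (q : List (Fin n)) : LRose K n := (q.reverse.map (gg K n)).prod

variable {K n}

lemma rEstr_nil : rEstr K n [] = 1 := rfl

lemma rGstr_nil : rGstr K n [] = 1 := rfl

lemma rEstr_cons (a : Fin n) (p : List (Fin n)) :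
    rEstr K n (a :: p) = ee K n a * rEstr K n p := by
  simp [rEstr]

lemma rGstr_cons (a : Fin n) (q : List (Fin n)) :
    rGstr K n (a :: q) = rGstr K n q * gg K n a := by
  simp [rGstr]

lemma rEstr_append (p r : List (Fin n)) :
    rEstr K n (p ++ r) = rEstr K n p * rEstr K n r := by
  simp [rEstr]

lemma rGstr_append (p r : List (Fin n)) :
    rGstr K n (p ++ r) = rGstr K n r * rGstr K n p := by
  simp [rGstr]

lemma gg_mul_ee (i j : Fin n) :
    gg K n i * ee K n j = if i = j then 1 else 0 := by
  by_cases h : i = j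
  · subst h
    rw [if_pos rfl, gg, ee, ← map_mul,
      RingQuot.mkAlgHom_rel K (RoseRel.ghostEdgeSame i), map_one]
  · rw [if_neg h, gg, ee, ← map_mul,
      RingQuot.mkAlgHom_rel K (RoseRel.ghostEdgeNe i j h), map_zero]

lemma rose_ck2 : (∑ i : Fin n, ee K n i * gg K n i) = 1 := by
  have := RingQuot.mkAlgHom_rel K (RoseRel.ck2 (K := K) (n := n))
  simpa only [map_sum, map_mul, map_one, ee, gg] using this

/-- Key trichotomy: the product of a ghost string and a real string. -/
lemma rGstr_mul_rEstr (q p : List (Fin n)) :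
    rGstr K n q * rEstr K n p =
      if q <+: p then rEstr K n (p.drop q.length)
      else if p <+: q then rGstr K n (q.drop p.length) else 0 := by
  induction q generalizing p with
  | nil => simp [rGstr_nil]
  | cons a q ih =>
    cases p with
    | nil =>
      simp [rEstr_nil, List.cons_prefix_cons]
    | cons b p =>
      rw [rGstr_cons, rEstr_cons]
      have hassoc : rGstr K n q * gg K n a * (ee K n b * rEstr K n p)
          = rGstr K n q * (gg K n a * ee K n b) * rEstr K n p := by
        simp only [mul_assoc]
      rw [hassoc, gg_mul_ee]
      by_cases hab : a = b
      · subst hab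
        rw [if_pos rfl, mul_one, ih]
        simp [List.cons_prefix_cons]
      · rw [if_neg hab, mul_zero, zero_mul]
        rw [if_neg (fun h => hab (List.cons_prefix_cons.mp h).1),
            if_neg (fun h => hab ((List.cons_prefix_cons.mp h).1).symm)]

lemma ee_eq_monomial (i : Fin n) : ee K n i = rEstr K n [i] * rGstr K n [] := by
  simp [rEstr, rGstr]

lemma gg_eq_monomial (i : Fin n) : gg K n i = rEstr K n [] * rGstr K n [i] := by
  simp [rEstr, rGstr]

/-- The set of monomials `p q*`. -/
def rSetM : Set (LRose K n) :=
  {x | ∃ p q : List (Fin n), x = rEstr K n p * rGstr K n q}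

lemma monomial_mul_mem (p q p' q' : List (Fin n)) :
    (rEstr K n p * rGstr K n q) * (rEstr K n p' * rGstr K n q')
      ∈ Submodule.span K (rSetM (K := K) (n := n)) := by
  have h : (rEstr K n p * rGstr K n q) * (rEstr K n p' * rGstr K n q')
      = rEstr K n p * (rGstr K n q * rEstr K n p') * rGstr K n q' := by
    simp only [mul_assoc]
  rw [h, rGstr_mul_rEstr]
  split_ifs with h1 h2
  · have : rEstr K n p * rEstr K n (p'.drop q.length) * rGstr K n q'
        = rEstr K n (p ++ p'.drop q.length) * rGstr K n q' := by rw [rEstr_append]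
    rw [this]
    exact Submodule.subset_span ⟨_, _, rfl⟩
  · have : rEstr K n p * rGstr K n (q.drop p'.length) * rGstr K n q'
        = rEstr K n p * rGstr K n (q' ++ q.drop p'.length) := by
      rw [rGstr_append, mul_assoc]
    rw [this]
    exact Submodule.subset_span ⟨_, _, rfl⟩
  · simp

lemma mul_mem_span {x y : LRose K n}
    (hx : x ∈ Submodule.span K (rSetM (K := K) (n := n)))
    (hy : y ∈ Submodule.span K (rSetM (K := K) (n := n))) :
    x * y ∈ Submodule.span K (rSetM (K := K) (n := n)) := by
  induction hx using Submodule.span_induction with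
  | mem x hx =>
    induction hy using Submodule.span_induction with
    | mem y hy =>
      obtain ⟨p, q, rfl⟩ := hx
      obtain ⟨p', q', rfl⟩ := hy
      exact monomial_mul_mem p q p' q'
    | zero => simpa using Submodule.zero_mem _
    | add y z _ _ hy hz => rw [mul_add]; exact Submodule.add_mem _ hy hz
    | smul a y _ hy => rw [mul_smul_comm]; exact Submodule.smul_mem _ a hy
  | zero => simpa using Submodule.zero_mem _
  | add x z _ _ hx hz => rw [add_mul]; exact Submodule.add_mem _ hx hz
  | smul a x _ hx => rw [smul_mul_assoc]; exact Submodule.smul_mem _ a hx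

lemma mem_span_setM (x : LRose K n) :
    x ∈ Submodule.span K (rSetM (K := K) (n := n)) := by
  obtain ⟨y, rfl⟩ := RingQuot.mkAlgHom_surjective K (RoseRel K n) x
  induction y using FreeAlgebra.induction with
  | grade0 r =>
    rw [AlgHom.commutes, Algebra.algebraMap_eq_smul_one]
    refine Submodule.smul_mem _ _ (Submodule.subset_span ⟨[], [], by simp [rEstr, rGstr]⟩)
  | grade1 x =>
    cases x with
    | e i => exact Submodule.subset_span ⟨[i], [], ee_eq_monomial i⟩
    | g i => exact Submodule.subset_span ⟨[], [i], gg_eq_monomial i⟩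
  | mul a b ha hb => rw [map_mul]; exact mul_mem_span ha hb
  | add a b ha hb => rw [map_add]; exact Submodule.add_mem _ ha hb

/-- The separating word `0^M 1`. -/
def rLam (n : ℕ) [NeZero n] (M : ℕ) : List (Fin n) := List.replicate M 0 ++ [1]

lemma rLam_length [NeZero n] (M : ℕ) : (rLam n M).length = M + 1 := by
  simp [rLam]

lemma rLam_drop [NeZero n] {M j : ℕ} (hj : j ≤ M) :
    (rLam n M).drop j = List.replicate (M - j) (0 : Fin n) ++ [1] := by
  rw [rLam, List.drop_append, List.drop_replicate]
  have : j - (List.replicate M (0 : Fin n)).length = 0 := by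
    simp [Nat.sub_eq_zero_of_le hj]
  rw [this]
  rfl

lemma prefix_rep_one [NeZero n] (hn : 2 ≤ n) {s t : ℕ}
    (h : (List.replicate s (0 : Fin n) ++ [1]) <+: (List.replicate t (0 : Fin n) ++ [1])) :
    s = t := by
  by_contra hne
  have hle : s + 1 ≤ t + 1 := by simpa using h.length_le
  have hst : s < t := by omega
  have h2 : List.replicate s (0 : Fin n) ++ [1]
      = (List.replicate t (0 : Fin n) ++ [1]).take (s + 1) := by
    have := List.prefix_iff_eq_take.mp h
    simpa using this
  rw [List.take_append, List.take_replicate,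
    min_eq_left (by omega : s + 1 ≤ t)] at h2
  have hz : s + 1 - (List.replicate t (0 : Fin n)).length = 0 := by simp; omega
  rw [hz, List.take_zero, List.append_nil, List.replicate_succ'] at h2
  have h3 : [(1 : Fin n)] = [(0 : Fin n)] := List.append_cancel_left h2
  have h4 : ((1 : Fin n)).val = ((0 : Fin n)).val := by
    rw [List.cons.injEq] at h3
    rw [h3.1]
  rw [Fin.val_one' n, Nat.mod_eq_of_lt (by omega), Fin.val_zero] at h4
  exact one_ne_zero h4

lemma conj_monomial [NeZero n] (hn : 2 ≤ n) (p q : List (Fin n)) {M : ℕ}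
    (hp : p.length ≤ M) (hq : q.length ≤ M) :
    ∃ k : K, rGstr K n (rLam n M) * (rEstr K n p * rGstr K n q) * rEstr K n (rLam n M)
      = algebraMap K (LRose K n) k := by
  have hassoc : rGstr K n (rLam n M) * (rEstr K n p * rGstr K n q) * rEstr K n (rLam n M)
      = (rGstr K n (rLam n M) * rEstr K n p) * (rGstr K n q * rEstr K n (rLam n M)) := by
    simp only [mul_assoc]
  rw [hassoc, rGstr_mul_rEstr, rGstr_mul_rEstr]
  have hlam_not_prefix_p : ¬ (rLam n M <+: p) := by
    intro h
    have := h.length_le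
    rw [rLam_length] at this
    omega
  have hlam_not_prefix_q : ¬ (rLam n M <+: q) := by
    intro h
    have := h.length_le
    rw [rLam_length] at this
    omega
  rw [if_neg hlam_not_prefix_p, if_neg hlam_not_prefix_q]
  by_cases hp' : p <+: rLam n M
  · by_cases hq' : q <+: rLam n M
    · rw [if_pos hp', if_pos hq', rLam_drop hp, rLam_drop hq]
      by_cases hpq : M - p.length = M - q.length
      · refine ⟨1, ?_⟩
        rw [hpq, rGstr_mul_rEstr, if_pos (List.prefix_refl _)]
        rw [List.drop_length]
        simp [rEstr_nil]
      · refine ⟨0, ?_⟩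
        rw [rGstr_mul_rEstr,
          if_neg (fun h => hpq (prefix_rep_one hn h).symm),
          if_neg (fun h => hpq (prefix_rep_one hn h))]
        simp
    · exact ⟨0, by rw [if_neg hq']; simp⟩
  · exact ⟨0, by rw [if_neg hp']; simp⟩

lemma conj_span [NeZero n] (hn : 2 ≤ n) (x : LRose K n) :
    ∃ L : ℕ, ∀ M : ℕ, L ≤ M → ∃ k : K,
      rGstr K n (rLam n M) * x * rEstr K n (rLam n M) = algebraMap K (LRose K n) k := by
  induction mem_span_setM x using Submodule.span_induction with
  | mem x hx =>
    obtain ⟨p, q, rfl⟩ := hx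
    exact ⟨max p.length q.length, fun M hM =>
      conj_monomial hn p q (le_trans (le_max_left _ _) hM) (le_trans (le_max_right _ _) hM)⟩
  | zero => exact ⟨0, fun M _ => ⟨0, by simp⟩⟩
  | add x y _ _ hx hy =>
    obtain ⟨L1, h1⟩ := hx
    obtain ⟨L2, h2⟩ := hy
    refine ⟨max L1 L2, fun M hM => ?_⟩
    obtain ⟨k1, hk1⟩ := h1 M (le_trans (le_max_left _ _) hM)
    obtain ⟨k2, hk2⟩ := h2 M (le_trans (le_max_right _ _) hM)
    refine ⟨k1 + k2, ?_⟩
    rw [mul_add, add_mul, hk1, hk2, map_add]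
  | smul a x _ hx =>
    obtain ⟨L, h⟩ := hx
    refine ⟨L, fun M hM => ?_⟩
    obtain ⟨k, hk⟩ := h M hM
    refine ⟨a * k, ?_⟩
    rw [mul_smul_comm, smul_mul_assoc, hk, map_mul, Algebra.smul_def]

/-- A central element is a scalar. -/
lemma central_eq_scalar (hn : 2 ≤ n) (z : LRose K n)
    (hz : ∀ r : LRose K n, z * r = r * z) :
    ∃ k : K, z = algebraMap K (LRose K n) k := by
  haveI : NeZero n := ⟨by omega⟩
  obtain ⟨L, hL⟩ := conj_span hn z
  obtain ⟨k, hk⟩ := hL L le_rfl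
  refine ⟨k, ?_⟩
  have h1 : rGstr K n (rLam n L) * rEstr K n (rLam n L) = 1 := by
    rw [rGstr_mul_rEstr, if_pos (List.prefix_refl _), List.drop_length, rEstr_nil]
  calc z = z * (rGstr K n (rLam n L) * rEstr K n (rLam n L)) := by rw [h1, mul_one]
    _ = rGstr K n (rLam n L) * z * rEstr K n (rLam n L) := by
        rw [← mul_assoc, ← hz (rGstr K n (rLam n L))]
    _ = algebraMap K (LRose K n) k := hk

lemma comm_of_sq_zero {A : Type} [Ring A] (z x : A) (hx : x * x = 0)
    (hz : ∀ g : Aˣ, z * ↑g = ↑g * z) : z * x = x * z := by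
  have h1 : ((1 : A) + x) * (1 - x) = 1 := by
    rw [mul_sub, mul_one, add_mul, one_mul, hx, add_zero, add_sub_cancel_right]
  have h2 : ((1 : A) - x) * (1 + x) = 1 := by
    rw [sub_mul, one_mul, mul_add, mul_one, hx, add_zero, add_sub_cancel_right]
  have := hz ⟨1 + x, 1 - x, h1, h2⟩
  simp only [Units.val_mk, mul_add, add_mul, mul_one, one_mul] at this
  exact add_left_cancel this

lemma gstr_estr_self (q : List (Fin n)) : rGstr K n q * rEstr K n q = 1 := by
  rw [rGstr_mul_rEstr, if_pos (List.prefix_refl _), List.drop_length, rEstr_nil]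

lemma gstr_estr_zero {q p : List (Fin n)} (h1 : ¬ q <+: p) (h2 : ¬ p <+: q) :
    rGstr K n q * rEstr K n p = 0 := by
  rw [rGstr_mul_rEstr, if_neg h1, if_neg h2]

lemma sq_zero_of {p q : List (Fin n)} (h : rGstr K n q * rEstr K n p = 0) :
    (rEstr K n p * rGstr K n q) * (rEstr K n p * rGstr K n q) = 0 := by
  have : (rEstr K n p * rGstr K n q) * (rEstr K n p * rGstr K n q)
      = rEstr K n p * (rGstr K n q * rEstr K n p) * rGstr K n q := by
    simp only [mul_assoc]
  rw [this, h, mul_zero, zero_mul]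

lemma split_monomial (p q r : List (Fin n)) :
    rEstr K n p * rGstr K n r
      = (rEstr K n p * rGstr K n q) * (rEstr K n q * rGstr K n r) := by
  rw [mul_assoc, ← mul_assoc (rGstr K n q), gstr_estr_self, one_mul]

lemma not_cons_prefix_cons {a b : Fin n} (hab : a ≠ b) (l l' : List (Fin n)) :
    ¬ (a :: l) <+: (b :: l') := fun h => hab (List.cons_prefix_cons.mp h).1

end RoseAux

/-- The canonical homomorphism `T : U(L_K(R_n)) → Inn(L_K(R_n))`,
`u ↦ τ_u` (`τ_u : r ↦ u^{-1} r u`), is surjective (by the very definition of the group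
of inner automorphisms) and its kernel is `K^* · 1`: `τ_u = id` iff `u` is a nonzero
scalar multiple of the identity.  Consequently the center of the group `U(L_K(R_n))`
equals `K^* · 1`. -/
theorem stmt11 (K : Type) [Field K] (n : ℕ) (hn : 2 ≤ n) :
    (∀ u : (LRose K n)ˣ,
      (∀ r : LRose K n, (↑u⁻¹ : LRose K n) * r * (u : LRose K n) = r) ↔
        ∃ k : K, k ≠ 0 ∧ (u : LRose K n) = algebraMap K (LRose K n) k) ∧
    (∀ u : (LRose K n)ˣ,
      u ∈ Subgroup.center (LRose K n)ˣ ↔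
        ∃ k : K, k ≠ 0 ∧ (u : LRose K n) = algebraMap K (LRose K n) k) := by
  haveI : NeZero n := ⟨by omega⟩
  haveI : Nontrivial (Fin n) := Fin.nontrivial_iff_two_le.mpr hn
  have part1 : ∀ u : (LRose K n)ˣ,
      (∀ r : LRose K n, (↑u⁻¹ : LRose K n) * r * (u : LRose K n) = r) ↔
        ∃ k : K, k ≠ 0 ∧ (u : LRose K n) = algebraMap K (LRose K n) k := by
    intro u
    constructor
    · intro h
      have hz : ∀ r : LRose K n, (↑u : LRose K n) * r = r * ↑u := by
        intro r
        calc (↑u : LRose K n) * r = ↑u * (↑u⁻¹ * r * ↑u) := by rw [h r]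
          _ = (↑u * ↑u⁻¹) * r * ↑u := by simp only [mul_assoc]
          _ = r * ↑u := by rw [u.mul_inv, one_mul]
      obtain ⟨k, hk⟩ := central_eq_scalar (K := K) (n := n) hn ((u : LRose K n)) hz
      by_cases hk0 : k = 0
      · have h10 : (1 : LRose K n) = 0 := by
          have hui := u.mul_inv
          rw [hk, hk0, map_zero, zero_mul] at hui
          exact hui.symm
        exact ⟨1, one_ne_zero, by rw [hk, hk0, map_zero, map_one, h10]⟩
      · exact ⟨k, hk0, hk⟩
    · rintro ⟨k, hk0, hk⟩ r
      have hcomm : (↑u : LRose K n) * r = r * ↑u := by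
        rw [hk]; exact Algebra.commutes k r
      calc (↑u⁻¹ : LRose K n) * r * ↑u = ↑u⁻¹ * (r * ↑u) := by rw [mul_assoc]
        _ = ↑u⁻¹ * (↑u * r) := by rw [← hcomm]
        _ = (↑u⁻¹ * ↑u) * r := by rw [mul_assoc]
        _ = r := by rw [u.inv_mul, one_mul]
  refine ⟨part1, fun u => ?_⟩
  rw [Subgroup.mem_center_iff]
  constructor
  · intro h
    have hz : ∀ g : (LRose K n)ˣ, (↑u : LRose K n) * ↑g = ↑g * ↑u := by
      intro g
      have := congrArg Units.val (h g)
      rw [Units.val_mul, Units.val_mul] at this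
      exact this.symm
    have hsq : ∀ x : LRose K n, x * x = 0 → (↑u : LRose K n) * x = x * ↑u :=
      fun x hx => comm_of_sq_zero (↑u) x hx hz
    have hM : ∀ p q : List (Fin n), ¬ q <+: p → ¬ p <+: q →
        (↑u : LRose K n) * (rEstr K n p * rGstr K n q)
          = (rEstr K n p * rGstr K n q) * ↑u :=
      fun p q h1 h2 => hsq _ (sq_zero_of (gstr_estr_zero h1 h2))
    have hmul : ∀ a b : LRose K n, (↑u : LRose K n) * a = a * ↑u →
        (↑u : LRose K n) * b = b * ↑u → (↑u : LRose K n) * (a * b) = (a * b) * ↑u := by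
      intro a b ha hb
      rw [← mul_assoc, ha, mul_assoc, hb, ← mul_assoc]
    have hee : ∀ i : Fin n, (↑u : LRose K n) * ee K n i = ee K n i * ↑u := by
      intro i
      obtain ⟨j, hj⟩ := exists_ne i
      have hterm : ∀ m : Fin n, (↑u : LRose K n) * (rEstr K n [i, m] * rGstr K n [m])
          = (rEstr K n [i, m] * rGstr K n [m]) * ↑u := by
        intro m
        by_cases hmi : m = i
        · subst hmi
          rw [split_monomial [m, m] [j, j] [m]]
          exact hmul _ _
            (hM _ _ (not_cons_prefix_cons hj _ _) (not_cons_prefix_cons (Ne.symm hj) _ _))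
            (hM _ _ (not_cons_prefix_cons (Ne.symm hj) _ _) (not_cons_prefix_cons hj _ _))
        · exact hM _ _ (not_cons_prefix_cons hmi _ _) (not_cons_prefix_cons (Ne.symm hmi) _ _)
      have hsum : ee K n i = ∑ m : Fin n, rEstr K n [i, m] * rGstr K n [m] := by
        have h1 : ∀ m : Fin n, rEstr K n [i, m] * rGstr K n [m]
            = ee K n i * (ee K n m * gg K n m) := by
          intro m
          simp [rEstr, rGstr, mul_assoc]
        rw [Finset.sum_congr rfl (fun m _ => h1 m), ← Finset.mul_sum, rose_ck2, mul_one]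
      rw [hsum, Finset.mul_sum, Finset.sum_mul]
      exact Finset.sum_congr rfl fun m _ => hterm m
    have hgg : ∀ i : Fin n, (↑u : LRose K n) * gg K n i = gg K n i * ↑u := by
      intro i
      obtain ⟨j, hj⟩ := exists_ne i
      have hterm : ∀ m : Fin n, (↑u : LRose K n) * (rEstr K n [m] * rGstr K n [i, m])
          = (rEstr K n [m] * rGstr K n [i, m]) * ↑u := by
        intro m
        by_cases hmi : m = i
        · subst hmi
          rw [split_monomial [m] [j] [m, m]]
          exact hmul _ _
            (hM _ _ (not_cons_prefix_cons hj _ _) (not_cons_prefix_cons (Ne.symm hj) _ _))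
            (hM _ _ (not_cons_prefix_cons (Ne.symm hj) _ _) (not_cons_prefix_cons hj _ _))
        · exact hM _ _ (not_cons_prefix_cons (Ne.symm hmi) _ _) (not_cons_prefix_cons hmi _ _)
      have hsum : gg K n i = ∑ m : Fin n, rEstr K n [m] * rGstr K n [i, m] := by
        have h1 : ∀ m : Fin n, rEstr K n [m] * rGstr K n [i, m]
            = (ee K n m * gg K n m) * gg K n i := by
          intro m
          simp [rEstr, rGstr, mul_assoc]
        rw [Finset.sum_congr rfl (fun m _ => h1 m), ← Finset.sum_mul, rose_ck2, one_mul]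
      rw [hsum, Finset.mul_sum, Finset.sum_mul]
      exact Finset.sum_congr rfl fun m _ => hterm m
    have hall : ∀ r : LRose K n, (↑u : LRose K n) * r = r * ↑u := by
      intro r
      obtain ⟨y, rfl⟩ := RingQuot.mkAlgHom_surjective K (RoseRel K n) r
      induction y using FreeAlgebra.induction with
      | grade0 k =>
        rw [AlgHom.commutes]
        exact (Algebra.commutes k _).symm
      | grade1 x =>
        cases x with
        | e i => exact hee i
        | g i => exact hgg i
      | mul a b ha hb => rw [map_mul]; exact hmul _ _ ha hb
      | add a b ha hb => rw [map_add, mul_add, add_mul, ha, hb]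
    refine (part1 u).mp (fun r => ?_)
    calc (↑u⁻¹ : LRose K n) * r * ↑u = ↑u⁻¹ * (r * ↑u) := by rw [mul_assoc]
      _ = ↑u⁻¹ * (↑u * r) := by rw [hall r]
      _ = (↑u⁻¹ * ↑u) * r := by rw [mul_assoc]
      _ = r := by rw [u.inv_mul, one_mul]
  · rintro ⟨k, hk0, hk⟩ g
    apply Units.ext
    rw [Units.val_mul, Units.val_mul, hk]
    exact (Algebra.commutes k _).symm
end

section
/- Let n ≥ 2 be an integer, K a field, and R_n the rose graph with n petals. Let P = (p_{ij}) ∈ GL_n(L_K(R_n)_0) satisfy φ_P(P) = P, and write P^{-1} = (p^{(-1)}_{ij}). Then the K-algebra homomorphism θ_P : L_K(R_n) → L_K(R_n)^{φ_P} defined by θ_P(v) = v, θ_P(e_i) = e_i and θ_P(e_i*) = Σ_{k=1}^n p_{ik} e_k* for 1 ≤ i ≤ n, is an isomorphism if and only if p_{ij} and p^{(-1)}_{ij} belong to the image of θ_P for all 1 ≤ i, j ≤ n. -/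
namespace S14

variable (K : Type) [Field K] (n : ℕ)

noncomputable def Ee (p : List (Fin n)) : LRose K n := (p.map (ee K n)).prod
noncomputable def Gg (q : List (Fin n)) : LRose K n := (q.reverse.map (gg K n)).prod

variable {K n}

lemma Ee_nil : Ee K n [] = 1 := rfl
lemma Gg_nil : Gg K n [] = 1 := rfl

lemma Ee_cons (i : Fin n) (p : List (Fin n)) : Ee K n (i :: p) = ee K n i * Ee K n p := by
  simp [Ee]

lemma Ee_append (p r : List (Fin n)) : Ee K n (p ++ r) = Ee K n p * Ee K n r := by
  simp [Ee]

lemma Gg_append (q s : List (Fin n)) : Gg K n (q ++ s) = Gg K n s * Gg K n q := by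
  simp [Gg]

lemma Gg_single (i : Fin n) : Gg K n [i] = gg K n i := by simp [Gg]

lemma Gg_cons (i : Fin n) (q : List (Fin n)) : Gg K n (i :: q) = Gg K n q * gg K n i := by
  have : (i :: q) = [i] ++ q := rfl
  rw [this, Gg_append, Gg_single]

lemma rel1 (i : Fin n) : gg K n i * ee K n i = 1 := by
  have h := RingQuot.mkAlgHom_rel K (RoseRel.ghostEdgeSame (K := K) (n := n) i)
  simpa [map_mul, map_one, ee, gg] using h

lemma rel2 {i j : Fin n} (h : i ≠ j) : gg K n i * ee K n j = 0 := by
  have h2 := RingQuot.mkAlgHom_rel K (RoseRel.ghostEdgeNe (K := K) (n := n) i j h)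
  simpa [map_mul, map_zero, ee, gg] using h2

lemma rel3 : ∑ i : Fin n, ee K n i * gg K n i = 1 := by
  have h := RingQuot.mkAlgHom_rel K (RoseRel.ck2 (K := K) (n := n))
  simpa [map_sum, map_mul, map_one, ee, gg] using h

/-- membership of monomials -/
lemma mono_mem {p q : List (Fin n)} {d : ℤ} (h : (p.length : ℤ) - q.length = d) :
    Ee K n p * Gg K n q ∈ rComponent K n d :=
  Submodule.subset_span ⟨p, q, h, rfl⟩

lemma one_mem0 : (1 : LRose K n) ∈ rComponent K n 0 := by
  simpa [Ee, Gg] using mono_mem (K := K) (n := n) (d := 0) (p := ([] : List (Fin n))) (q := []) (by simp)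

lemma ee_mem (i : Fin n) : ee K n i ∈ rComponent K n 1 := by
  simpa [Ee, Gg] using mono_mem (K := K) (n := n) (d := 1) (p := [i]) (q := ([] : List (Fin n))) (by simp)

lemma gg_mem (i : Fin n) : gg K n i ∈ rComponent K n (-1) := by
  simpa [Ee, Gg] using mono_mem (K := K) (n := n) (d := -1) (p := ([] : List (Fin n))) (q := [i]) (by simp)

lemma Ee_mem (p : List (Fin n)) : Ee K n p ∈ rComponent K n p.length := by
  simpa [Ee, Gg] using mono_mem (K := K) (n := n) (d := p.length) (p := p) (q := ([] : List (Fin n))) (by simp)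

lemma Gg_mem (q : List (Fin n)) : Gg K n q ∈ rComponent K n (-(q.length : ℤ)) := by
  simpa [Ee, Gg] using mono_mem (K := K) (n := n) (d := -(q.length : ℤ)) (p := ([] : List (Fin n))) (q := q) (by simp)

end S14

namespace S14

variable {K : Type} [Field K] {n : ℕ}

lemma GE_mem (q r : List (Fin n)) :
    Gg K n q * Ee K n r ∈ rComponent K n ((r.length : ℤ) - q.length) := by
  induction q generalizing r with
  | nil =>
      simpa [Gg_nil] using mono_mem (K := K) (n := n) (d := ((r.length : ℤ) - 0))
        (p := r) (q := ([] : List (Fin n))) (by simp)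
  | cons i q' ih =>
      cases r with
      | nil =>
          simpa [Ee_nil] using mono_mem (K := K) (n := n)
            (d := ((0 : ℤ) - (i :: q').length))
            (p := ([] : List (Fin n))) (q := i :: q') (by simp)
      | cons j r' =>
          rw [Gg_cons, Ee_cons]
          by_cases h : i = j
          · subst h
            have : Gg K n q' * gg K n i * (ee K n i * Ee K n r')
                = Gg K n q' * Ee K n r' := by
              rw [mul_assoc (Gg K n q'), ← mul_assoc (gg K n i), rel1, one_mul]
            rw [this]
            have := ih r'
            have harith : ((r'.length : ℤ) - q'.length)
                = ((i :: r').length : ℤ) - (i :: q').length := by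
              simp
            rwa [harith] at this
          · have : Gg K n q' * gg K n i * (ee K n j * Ee K n r') = 0 := by
              rw [mul_assoc (Gg K n q'), ← mul_assoc (gg K n i), rel2 h,
                zero_mul, mul_zero]
            rw [this]
            exact Submodule.zero_mem _

lemma Ee_mul_mem {d : ℤ} (p : List (Fin n)) {x : LRose K n} (hx : x ∈ rComponent K n d) :
    Ee K n p * x ∈ rComponent K n (p.length + d) := by
  induction hx using Submodule.span_induction with
  | mem y hy =>
      obtain ⟨r, s, hd, rfl⟩ := hy
      show Ee K n p * (Ee K n r * Gg K n s) ∈ _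
      rw [← mul_assoc, ← Ee_append]
      exact mono_mem (by simp [← hd]; ring)
  | zero => rw [mul_zero]; exact Submodule.zero_mem _
  | add y z _ _ hy hz => rw [mul_add]; exact Submodule.add_mem _ hy hz
  | smul c y _ hy => rw [mul_smul_comm]; exact Submodule.smul_mem _ _ hy

lemma mul_Gg_mem {d : ℤ} (s : List (Fin n)) {x : LRose K n} (hx : x ∈ rComponent K n d) :
    x * Gg K n s ∈ rComponent K n (d - s.length) := by
  induction hx using Submodule.span_induction with
  | mem y hy =>
      obtain ⟨r, q, hd, rfl⟩ := hy
      show (Ee K n r * Gg K n q) * Gg K n s ∈ _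
      rw [mul_assoc, ← Gg_append]
      exact mono_mem (by simp [← hd]; ring)
  | zero => rw [zero_mul]; exact Submodule.zero_mem _
  | add y z _ _ hy hz => rw [add_mul]; exact Submodule.add_mem _ hy hz
  | smul c y _ hy => rw [smul_mul_assoc]; exact Submodule.smul_mem _ _ hy

lemma mul_mem_comp {d₁ d₂ : ℤ} {x y : LRose K n}
    (hx : x ∈ rComponent K n d₁) (hy : y ∈ rComponent K n d₂) :
    x * y ∈ rComponent K n (d₁ + d₂) := by
  induction hx using Submodule.span_induction with
  | mem z hz =>
      obtain ⟨p, q, hd, rfl⟩ := hz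
      -- (Ee p * Gg q) * y
      have h1 : ∀ w ∈ rComponent K n d₂,
          (Ee K n p * Gg K n q) * w ∈ rComponent K n (d₁ + d₂) := by
        intro w hw
        induction hw using Submodule.span_induction with
        | mem w' hw' =>
            obtain ⟨r, s, hd2, rfl⟩ := hw'
            show (Ee K n p * Gg K n q) * (Ee K n r * Gg K n s) ∈ _
            have h2 := GE_mem (K := K) (n := n) q r
            have h3 := Ee_mul_mem p h2
            have h4 := mul_Gg_mem s h3
            have : Ee K n p * (Gg K n q * Ee K n r) * Gg K n s
                = Ee K n p * Gg K n q * (Ee K n r * Gg K n s) := by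
              simp only [mul_assoc]
            rw [this] at h4
            have harith : ((p.length : ℤ) + ((r.length : ℤ) - q.length) - s.length)
                = d₁ + d₂ := by rw [← hd, ← hd2]; ring
            rwa [harith] at h4
        | zero => rw [mul_zero]; exact Submodule.zero_mem _
        | add a b _ _ ha hb => rw [mul_add]; exact Submodule.add_mem _ ha hb
        | smul c a _ ha => rw [mul_smul_comm]; exact Submodule.smul_mem _ _ ha
      exact h1 y hy
  | zero => rw [zero_mul]; exact Submodule.zero_mem _
  | add a b _ _ ha hb => rw [add_mul]; exact Submodule.add_mem _ ha hb
  | smul c a _ ha => rw [smul_mul_assoc]; exact Submodule.smul_mem _ _ ha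

/-- orthogonality of equal-length words -/
lemma GE_orth : ∀ (q p : List (Fin n)), q.length = p.length →
    Gg K n q * Ee K n p = if q = p then 1 else 0 := by
  intro q
  induction q with
  | nil => intro p hp; cases p with
    | nil => simp [Gg_nil, Ee_nil]
    | cons j p' => simp at hp
  | cons i q' ih =>
      intro p hp
      cases p with
      | nil => simp at hp
      | cons j p' =>
          rw [Gg_cons, Ee_cons]
          by_cases h : i = j
          · subst h
            have : Gg K n q' * gg K n i * (ee K n i * Ee K n p')
                = Gg K n q' * Ee K n p' := by
              rw [mul_assoc (Gg K n q'), ← mul_assoc (gg K n i), rel1, one_mul]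
            rw [this, ih p' (by simpa using hp)]
            by_cases h2 : q' = p' <;> simp [h2]
          · have : Gg K n q' * gg K n i * (ee K n j * Ee K n p') = 0 := by
              rw [mul_assoc (Gg K n q'), ← mul_assoc (gg K n i), rel2 h,
                zero_mul, mul_zero]
            rw [this]
            simp [h]

/-- every element is a combination of monomials -/
lemma span_top (x : LRose K n) :
    x ∈ Submodule.span K {y : LRose K n | ∃ p q : List (Fin n),
      y = Ee K n p * Gg K n q} := by
  set M := Submodule.span K {y : LRose K n | ∃ p q : List (Fin n),
      y = Ee K n p * Gg K n q} with hM
  have hmono : ∀ p q : List (Fin n), Ee K n p * Gg K n q ∈ M :=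
    fun p q => Submodule.subset_span ⟨p, q, rfl⟩
  have hcomp : ∀ d : ℤ, rComponent K n d ≤ M := by
    intro d
    rw [rComponent, Submodule.span_le]
    rintro y ⟨p, q, hd, rfl⟩
    exact hmono p q
  have hone : (1 : LRose K n) ∈ M := by
    simpa [Ee_nil, Gg_nil] using hmono [] []
  have hmul : ∀ a b : LRose K n, a ∈ M → b ∈ M → a * b ∈ M := by
    intro a b ha hb
    induction ha using Submodule.span_induction with
    | mem y hy =>
        obtain ⟨p, q, rfl⟩ := hy
        induction hb using Submodule.span_induction with
        | mem z hz =>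
            obtain ⟨r, s, rfl⟩ := hz
            have := mul_mem_comp (mono_mem (K := K) (n := n)
              (d := (p.length : ℤ) - q.length) rfl)
              (mono_mem (K := K) (n := n) (d := (r.length : ℤ) - s.length)
                (p := r) (q := s) rfl)
            exact hcomp _ this
        | zero => rw [mul_zero]; exact Submodule.zero_mem _
        | add u v _ _ hu hv => rw [mul_add]; exact Submodule.add_mem _ hu hv
        | smul c u _ hu => rw [mul_smul_comm]; exact Submodule.smul_mem _ _ hu
    | zero => rw [zero_mul]; exact Submodule.zero_mem _
    | add u v _ _ hu hv => rw [add_mul]; exact Submodule.add_mem _ hu hv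
    | smul c u _ hu => rw [smul_mul_assoc]; exact Submodule.smul_mem _ _ hu
  obtain ⟨y, rfl⟩ := RingQuot.mkAlgHom_surjective K (RoseRel K n) x
  induction y using FreeAlgebra.induction with
  | grade0 r =>
      rw [AlgHom.commutes]
      have : (algebraMap K (LRose K n)) r = r • 1 := Algebra.algebraMap_eq_smul_one r
      rw [this]
      exact Submodule.smul_mem _ _ hone
  | grade1 z => cases z with
    | e i => exact hcomp 1 (ee_mem i)
    | g i => exact hcomp (-1) (gg_mem i)
  | mul a b ha hb => rw [map_mul]; exact hmul _ _ ha hb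
  | add a b ha hb => rw [map_add]; exact Submodule.add_mem _ ha hb

end S14

namespace S14

variable (K : Type) [Field K] (n : ℕ)

open AddMonoidAlgebra in
noncomputable def ΓA : LRose K n →ₐ[K] AddMonoidAlgebra (LRose K n) ℤ :=
  RingQuot.liftAlgHom K ⟨FreeAlgebra.lift K (fun z => match z with
    | RGen.e i => AddMonoidAlgebra.single 1 (ee K n i)
    | RGen.g i => AddMonoidAlgebra.single (-1) (gg K n i)), by
      intro x y h
      induction h with
      | ghostEdgeSame i =>
          simp only [map_mul, map_one, FreeAlgebra.lift_ι_apply]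
          rw [AddMonoidAlgebra.single_mul_single, rel1]
          norm_num
      | ghostEdgeNe i j hne =>
          simp only [map_mul, map_zero, FreeAlgebra.lift_ι_apply]
          rw [AddMonoidAlgebra.single_mul_single, rel2 hne]
          exact AddMonoidAlgebra.single_zero _
      | ck2 =>
          simp only [map_sum, map_mul, map_one, FreeAlgebra.lift_ι_apply]
          have : ∀ i : Fin n, (AddMonoidAlgebra.single (1 : ℤ) (ee K n i) *
              AddMonoidAlgebra.single (-1 : ℤ) (gg K n i) :
              AddMonoidAlgebra (LRose K n) ℤ)
              = AddMonoidAlgebra.single 0 (ee K n i * gg K n i) := by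
            intro i
            rw [AddMonoidAlgebra.single_mul_single]
            norm_num
          rw [Finset.sum_congr rfl (fun i _ => this i)]
          have hs : ∀ i : Fin n, (AddMonoidAlgebra.single (0 : ℤ) (ee K n i * gg K n i) :
              AddMonoidAlgebra (LRose K n) ℤ) = AddMonoidAlgebra.singleAddHom 0 (ee K n i * gg K n i) :=
            fun i => rfl
          rw [Finset.sum_congr rfl (fun i _ => hs i), ← map_sum]
          rw [rel3]
          exact AddMonoidAlgebra.one_def.symm⟩

variable {K n}

lemma ΓA_ee (i : Fin n) : ΓA K n (ee K n i) = AddMonoidAlgebra.single 1 (ee K n i) := by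
  rw [ee, ΓA, RingQuot.liftAlgHom_mkAlgHom_apply, FreeAlgebra.lift_ι_apply]
  rfl

lemma ΓA_gg (i : Fin n) : ΓA K n (gg K n i) = AddMonoidAlgebra.single (-1) (gg K n i) := by
  rw [gg, ΓA, RingQuot.liftAlgHom_mkAlgHom_apply, FreeAlgebra.lift_ι_apply]
  rfl

lemma ΓA_Ee (p : List (Fin n)) :
    ΓA K n (Ee K n p) = AddMonoidAlgebra.single (p.length : ℤ) (Ee K n p) := by
  induction p with
  | nil =>
      simp only [Ee_nil, map_one, List.length_nil, Nat.cast_zero]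
      exact AddMonoidAlgebra.one_def
  | cons i p' ih =>
      rw [Ee_cons, map_mul, ΓA_ee, ih, AddMonoidAlgebra.single_mul_single, ← Ee_cons]
      congr 1
      simp only [List.length_cons]
      push_cast
      ring

lemma ΓA_Gg (q : List (Fin n)) :
    ΓA K n (Gg K n q) = AddMonoidAlgebra.single (-(q.length : ℤ)) (Gg K n q) := by
  induction q with
  | nil =>
      simp only [Gg_nil, map_one, List.length_nil, Nat.cast_zero, neg_zero]
      exact AddMonoidAlgebra.one_def
  | cons i q' ih =>
      rw [Gg_cons, map_mul, ΓA_gg, ih, AddMonoidAlgebra.single_mul_single, ← Gg_cons]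
      congr 1
      simp only [List.length_cons]
      push_cast
      ring

lemma ΓA_mono (p q : List (Fin n)) :
    ΓA K n (Ee K n p * Gg K n q)
      = AddMonoidAlgebra.single ((p.length : ℤ) - q.length) (Ee K n p * Gg K n q) := by
  rw [map_mul, ΓA_Ee, ΓA_Gg, AddMonoidAlgebra.single_mul_single, ← sub_eq_add_neg]

lemma ΓA_of_mem {d : ℤ} {x : LRose K n} (hx : x ∈ rComponent K n d) :
    ΓA K n x = AddMonoidAlgebra.single d x := by
  induction hx using Submodule.span_induction with
  | mem y hy =>
      obtain ⟨p, q, hd, rfl⟩ := hy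
      show ΓA K n (Ee K n p * Gg K n q) = _
      rw [ΓA_mono, hd]
      rfl
  | zero =>
      rw [map_zero]
      exact (AddMonoidAlgebra.single_zero d).symm
  | add a b _ _ ha hb => rw [map_add, ha, hb, ← AddMonoidAlgebra.single_add]
  | smul c a _ ha => rw [map_smul, ha, AddMonoidAlgebra.smul_single]

variable (K n) in
noncomputable def pio (d : ℤ) : LRose K n →ₗ[K] LRose K n :=
  (Finsupp.lapply d) ∘ₗ (AddMonoidAlgebra.coeffLinearEquiv K).toLinearMap ∘ₗ (ΓA K n).toLinearMap

lemma pio_apply (d : ℤ) (x : LRose K n) : pio K n d x = (ΓA K n x).coeff d := rfl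

lemma pio_of_mem {d e : ℤ} {x : LRose K n} (hx : x ∈ rComponent K n d) :
    pio K n e x = if d = e then x else 0 := by
  rw [pio_apply, ΓA_of_mem hx, AddMonoidAlgebra.coeff_single, Finsupp.single_apply]

lemma pio_mem (d : ℤ) (x : LRose K n) : pio K n d x ∈ rComponent K n d := by
  have h := span_top (K := K) (n := n) x
  induction h using Submodule.span_induction with
  | mem y hy =>
      obtain ⟨p, q, rfl⟩ := hy
      rw [pio_of_mem (mono_mem (K := K) (n := n) (d := (p.length : ℤ) - q.length) rfl)]
      split
      · next h => exact h ▸ mono_mem rfl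
      · exact Submodule.zero_mem _
  | zero => rw [map_zero]; exact Submodule.zero_mem _
  | add a b _ _ ha hb => rw [map_add]; exact Submodule.add_mem _ ha hb
  | smul c a _ ha => rw [map_smul]; exact Submodule.smul_mem _ _ ha

variable (K n) in
noncomputable def SumL : (ℤ →₀ LRose K n) →ₗ[K] LRose K n :=
  Finsupp.lsum K (fun _ => (LinearMap.id : LRose K n →ₗ[K] LRose K n))

lemma SumL_single (d : ℤ) (m : LRose K n) : SumL K n (AddMonoidAlgebra.single d m).coeff = m := by
  show SumL K n (Finsupp.single d m) = m
  rw [SumL, Finsupp.lsum_single]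
  rfl

lemma decompose_eq (x : LRose K n) : SumL K n (ΓA K n x).coeff = x := by
  have h := span_top (K := K) (n := n) x
  induction h using Submodule.span_induction with
  | mem y hy =>
      obtain ⟨p, q, rfl⟩ := hy
      rw [ΓA_mono, SumL_single]
  | zero => rw [map_zero, AddMonoidAlgebra.coeff_zero, map_zero]
  | add a b _ _ ha hb => rw [map_add, AddMonoidAlgebra.coeff_add, map_add, ha, hb]
  | smul c a _ ha => rw [map_smul, AddMonoidAlgebra.coeff_smul, map_smul, ha]

lemma eq_zero_of_pio {x : LRose K n} (h : ∀ d, pio K n d x = 0) : x = 0 := by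
  have : ΓA K n x = 0 := by
    ext d
    rw [AddMonoidAlgebra.coeff_zero]
    exact h d
  rw [← decompose_eq (K := K) (n := n) x, this, AddMonoidAlgebra.coeff_zero, map_zero]

end S14

namespace S14

variable {K : Type} [Field K] {n : ℕ}

variable (K n) in
noncomputable def Em {k : ℕ} (u : Fin k → Fin n) : LRose K n := Ee K n (List.ofFn u)

variable (K n) in
noncomputable def Gm {k : ℕ} (u : Fin k → Fin n) : LRose K n := Gg K n (List.ofFn u)

lemma ofFn_snoc' {k : ℕ} (u : Fin k → Fin n) (i : Fin n) :
    List.ofFn (Fin.snoc u i) = List.ofFn u ++ [i] := by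
  rw [List.ofFn_succ']
  simp [List.concat_eq_append]

lemma Em_snoc {k : ℕ} (u : Fin k → Fin n) (i : Fin n) :
    Em K n (Fin.snoc u i) = Em K n u * ee K n i := by
  rw [Em, ofFn_snoc', Ee_append, Em]
  congr 1
  simp [Ee]

lemma Gm_snoc {k : ℕ} (v : Fin k → Fin n) (i : Fin n) :
    Gm K n (Fin.snoc v i) = gg K n i * Gm K n v := by
  rw [Gm, ofFn_snoc', Gg_append, Gg_single, Gm]

lemma Gm_mul_Em {k : ℕ} (u v : Fin k → Fin n) :
    Gm K n u * Em K n v = if u = v then 1 else 0 := by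
  have h := GE_orth (K := K) (n := n) (List.ofFn u) (List.ofFn v) (by simp)
  rw [Gm, Em, h]
  by_cases huv : u = v
  · subst huv; simp
  · rw [if_neg, if_neg huv]
    simpa [List.ofFn_inj] using huv

lemma Em_mem {k : ℕ} (u : Fin k → Fin n) : Em K n u ∈ rComponent K n k := by
  simpa [Em] using Ee_mem (K := K) (n := n) (List.ofFn u)

lemma Gm_mem {k : ℕ} (u : Fin k → Fin n) : Gm K n u ∈ rComponent K n (-(k : ℤ)) := by
  simpa [Gm] using Gg_mem (K := K) (n := n) (List.ofFn u)

lemma Em_mul_Gm_expand {k : ℕ} (u v : Fin k → Fin n) :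
    Em K n u * Gm K n v = ∑ i : Fin n, Em K n (Fin.snoc u i) * Gm K n (Fin.snoc v i) := by
  have : ∀ i : Fin n, Em K n (Fin.snoc u i) * Gm K n (Fin.snoc v i)
      = Em K n u * (ee K n i * gg K n i) * Gm K n v := by
    intro i
    rw [Em_snoc, Gm_snoc]
    simp only [mul_assoc]
  rw [Finset.sum_congr rfl (fun i _ => this i), ← Finset.sum_mul, ← Finset.mul_sum,
    rel3, mul_one]

variable (K n) in
def IsRep (k : ℕ) (b : LRose K n) (c : (Fin k → Fin n) → (Fin k → Fin n) → K) : Prop :=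
  b = ∑ u : Fin k → Fin n, ∑ v : Fin k → Fin n, c u v • (Em K n u * Gm K n v)

lemma raise1 {k : ℕ} {b : LRose K n} (h : ∃ c, IsRep K n k b c) :
    ∃ c, IsRep K n (k + 1) b c := by
  obtain ⟨c, hc⟩ := h
  set c' : (Fin (k+1) → Fin n) → (Fin (k+1) → Fin n) → K := fun u' v' =>
    if u' (Fin.last k) = v' (Fin.last k)
    then c (fun i => u' i.castSucc) (fun i => v' i.castSucc) else 0 with hc'def
  refine ⟨c', ?_⟩
  rw [IsRep, hc]
  set e := (Fin.snocEquiv (fun _ : Fin (k+1) => Fin n)) with hedef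
  have he : ∀ (x : Fin n × (Fin k → Fin n)), e x = Fin.snoc x.2 x.1 := fun _ => rfl
  have hcs : ∀ (u : Fin k → Fin n) (i : Fin n),
      (fun t : Fin k => (Fin.snoc u i : Fin (k+1) → Fin n) t.castSucc) = u := by
    intro u i; funext t; simp
  have hc'snoc : ∀ (u v : Fin k → Fin n) (i j : Fin n),
      c' (Fin.snoc u i) (Fin.snoc v j) = if i = j then c u v else 0 := by
    intro u v i j
    rw [hc'def]
    simp only [Fin.snoc_last, hcs]
  have key : (∑ u' : Fin (k+1) → Fin n, ∑ v' : Fin (k+1) → Fin n,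
        c' u' v' • (Em K n u' * Gm K n v'))
      = ∑ u : Fin k → Fin n, ∑ v : Fin k → Fin n, c u v • (Em K n u * Gm K n v) := by
    rw [← Equiv.sum_comp e (fun u' => ∑ v' : Fin (k+1) → Fin n,
      c' u' v' • (Em K n u' * Gm K n v'))]
    rw [Fintype.sum_prod_type]
    have inner : ∀ (i : Fin n) (u : Fin k → Fin n),
        (∑ v' : Fin (k+1) → Fin n,
          c' (Fin.snoc u i) v' • (Em K n (Fin.snoc u i) * Gm K n v'))
        = ∑ v : Fin k → Fin n, c u v • (Em K n (Fin.snoc u i) * Gm K n (Fin.snoc v i)) := by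
      intro i u
      rw [← Equiv.sum_comp e (fun v' =>
        c' (Fin.snoc u i) v' • (Em K n (Fin.snoc u i) * Gm K n v'))]
      rw [Fintype.sum_prod_type]
      have : ∀ j : Fin n, ∑ v : Fin k → Fin n,
          c' (Fin.snoc u i) (e (j, v)) • (Em K n (Fin.snoc u i) * Gm K n (e (j, v)))
          = ∑ v : Fin k → Fin n,
            (if i = j then c u v else 0) • (Em K n (Fin.snoc u i) * Gm K n (Fin.snoc v j)) := by
        intro j
        refine Finset.sum_congr rfl (fun v _ => ?_)
        rw [he, hc'snoc]
      rw [Finset.sum_congr rfl (fun j _ => this j)]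
      rw [Finset.sum_comm]
      refine Finset.sum_congr rfl (fun v _ => ?_)
      simp [Finset.sum_ite_eq]
    have houter : ∀ (x : Fin n × (Fin k → Fin n)),
        (∑ v' : Fin (k+1) → Fin n, c' (e x) v' • (Em K n (e x) * Gm K n v'))
        = ∑ v : Fin k → Fin n, c x.2 v • (Em K n (Fin.snoc x.2 x.1) * Gm K n (Fin.snoc v x.1)) := by
      intro x
      rw [he]
      exact inner x.1 x.2
    rw [Finset.sum_congr rfl (fun i _ => Finset.sum_congr rfl
      (fun u _ => houter (i, u)))]
    rw [Finset.sum_comm]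
    refine Finset.sum_congr rfl (fun u _ => ?_)
    rw [Finset.sum_comm]
    refine Finset.sum_congr rfl (fun v _ => ?_)
    show (∑ x : Fin n, c u v • (Em K n (Fin.snoc u x) * Gm K n (Fin.snoc v x))) = _
    rw [← Finset.smul_sum, ← Em_mul_Gm_expand]
  rw [key]

end S14

namespace S14

variable {K : Type} [Field K] {n : ℕ}

lemma raise_to {k t : ℕ} {b : LRose K n} (h : ∃ c, IsRep K n k b c) :
    ∃ c, IsRep K n (k + t) b c := by
  induction t with
  | zero => exact h
  | succ t ih => exact raise1 ih

lemma rep_of_mem0 {b : LRose K n} (hb : b ∈ rComponent K n 0) :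
    ∃ k, ∃ c, IsRep K n k b c := by
  induction hb using Submodule.span_induction with
  | mem y hy =>
      obtain ⟨p, q, hd, rfl⟩ := hy
      have hlen : p.length = q.length := by
        have : (p.length : ℤ) = q.length := by linarith [hd]
        exact_mod_cast this
      refine ⟨p.length, fun u0 v0 =>
        if u0 = p.get then (if v0 = (fun i => q.get (Fin.cast hlen i)) then 1 else 0) else 0, ?_⟩
      rw [IsRep]
      have hEm : Em K n p.get = Ee K n p := by rw [Em, List.ofFn_get]
      have hGm : Gm K n (fun i => q.get (Fin.cast hlen i)) = Gg K n q := by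
        rw [Gm]
        congr 1
        have := List.ofFn_congr hlen.symm q.get
        rw [← this, List.ofFn_get]
      simp only [ite_smul, one_smul, zero_smul, Finset.sum_ite_eq', Finset.mem_univ, if_true,
        Finset.sum_ite_irrel, Finset.sum_const_zero]
      rw [hEm, hGm]
      rfl
  | zero => exact ⟨0, 0, by simp [IsRep]⟩
  | add a b' _ _ ha hb' =>
      obtain ⟨k1, h1⟩ := ha
      obtain ⟨k2, h2⟩ := hb'
      have h1' : ∃ c, IsRep K n (max k1 k2) a c := by
        have e1 : k1 + (max k1 k2 - k1) = max k1 k2 := by omega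
        have := raise_to (t := max k1 k2 - k1) h1
        rwa [e1] at this
      have h2' : ∃ c, IsRep K n (max k1 k2) b' c := by
        have e2 : k2 + (max k1 k2 - k2) = max k1 k2 := by omega
        have := raise_to (t := max k1 k2 - k2) h2
        rwa [e2] at this
      obtain ⟨c1, hc1⟩ := h1'
      obtain ⟨c2, hc2⟩ := h2'
      refine ⟨max k1 k2, c1 + c2, ?_⟩
      rw [IsRep, hc1, hc2, ← Finset.sum_add_distrib]
      refine Finset.sum_congr rfl (fun u _ => ?_)
      rw [← Finset.sum_add_distrib]
      refine Finset.sum_congr rfl (fun v _ => ?_)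
      show _ = (c1 u v + c2 u v) • _
      rw [add_smul]
  | smul r a _ ha =>
      obtain ⟨k, c, hc⟩ := ha
      refine ⟨k, r • c, ?_⟩
      rw [IsRep, hc, Finset.smul_sum]
      refine Finset.sum_congr rfl (fun u _ => ?_)
      rw [Finset.smul_sum]
      refine Finset.sum_congr rfl (fun v _ => ?_)
      show _ = (r * c u v) • _
      rw [mul_smul]

end S14

namespace S14

variable {K : Type} [Field K] {n : ℕ}

lemma phi_graded {Q Q' : Matrix (Fin n) (Fin n) (LRose K n)}
    {φ : LRose K n →ₐ[K] LRose K n} (h : RPhiProps K n Q Q' φ)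
    (hQ : ∀ i j, Q i j ∈ rComponent K n 0) (hQ' : ∀ i j, Q' i j ∈ rComponent K n 0)
    {d : ℤ} {x : LRose K n} (hx : x ∈ rComponent K n d) : φ x ∈ rComponent K n d := by
  have hee : ∀ i : Fin n, φ (ee K n i) ∈ rComponent K n 1 := by
    intro i
    rw [h.1]
    refine Submodule.sum_mem _ (fun k _ => ?_)
    have := mul_mem_comp (ee_mem (K := K) (n := n) k) (hQ k i)
    simpa using this
  have hgg : ∀ i : Fin n, φ (gg K n i) ∈ rComponent K n (-1) := by
    intro i
    rw [h.2]
    refine Submodule.sum_mem _ (fun k _ => ?_)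
    have := mul_mem_comp (hQ' i k) (gg_mem (K := K) (n := n) k)
    simpa using this
  have hEe : ∀ p : List (Fin n), φ (Ee K n p) ∈ rComponent K n p.length := by
    intro p
    induction p with
    | nil => rw [Ee_nil, map_one]; simpa using one_mem0 (K := K) (n := n)
    | cons i p' ih =>
        rw [Ee_cons, map_mul]
        have := mul_mem_comp (hee i) ih
        have harith : (1 : ℤ) + p'.length = ((i :: p').length : ℤ) := by
          simp [List.length_cons]; ring
        rwa [harith] at this
  have hGg : ∀ q : List (Fin n), φ (Gg K n q) ∈ rComponent K n (-(q.length : ℤ)) := by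
    intro q
    induction q with
    | nil => rw [Gg_nil, map_one]; simpa using one_mem0 (K := K) (n := n)
    | cons i q' ih =>
        rw [Gg_cons, map_mul]
        have := mul_mem_comp ih (hgg i)
        have harith : (-(q'.length : ℤ)) + (-1) = -(((i :: q').length : ℤ)) := by
          simp [List.length_cons]; ring
        rwa [harith] at this
  induction hx using Submodule.span_induction with
  | mem y hy =>
      obtain ⟨p, q, hd, rfl⟩ := hy
      show φ (Ee K n p * Gg K n q) ∈ _
      rw [map_mul]
      have := mul_mem_comp (hEe p) (hGg q)
      have harith : (p.length : ℤ) + (-(q.length : ℤ)) = d := by rw [← hd]; ring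
      rwa [harith] at this
  | zero => rw [map_zero]; exact Submodule.zero_mem _
  | add a b _ _ ha hb => rw [map_add]; exact Submodule.add_mem _ ha hb
  | smul c a _ ha => rw [map_smul]; exact Submodule.smul_mem _ _ ha

lemma phi_iter_graded {Q Q' : Matrix (Fin n) (Fin n) (LRose K n)}
    {φ : LRose K n →ₐ[K] LRose K n} (h : RPhiProps K n Q Q' φ)
    (hQ : ∀ i j, Q i j ∈ rComponent K n 0) (hQ' : ∀ i j, Q' i j ∈ rComponent K n 0)
    (m : ℕ) {d : ℤ} {x : LRose K n} (hx : x ∈ rComponent K n d) :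
    (⇑φ)^[m] x ∈ rComponent K n d := by
  induction m with
  | zero => simpa using hx
  | succ m ih =>
      rw [Function.iterate_succ_apply']
      exact phi_graded h hQ hQ' ih

lemma iter_map_zero (φ : LRose K n →ₐ[K] LRose K n) (m : ℕ) : (⇑φ)^[m] 0 = 0 := by
  induction m with
  | zero => rfl
  | succ m ih => rw [Function.iterate_succ_apply, map_zero, ih]

end S14

namespace S14

structure Ctx (K : Type) [Field K] (n : ℕ) where
  P : Matrix (Fin n) (Fin n) (LRose K n)
  P' : Matrix (Fin n) (Fin n) (LRose K n)
  φP : LRose K n →ₐ[K] LRose K n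
  φP' : LRose K n →ₐ[K] LRose K n
  θ : LRose K n →ₗ[K] LRose K n
  hP0 : ∀ i j, P i j ∈ rComponent K n 0 ∧ P' i j ∈ rComponent K n 0
  hPP' : P * P' = 1
  hP'P : P' * P = 1
  hφP : RPhiProps K n P P' φP
  hφP' : RPhiProps K n P' P φP'
  hfix : P.map ⇑φP = P
  hinv : ∀ x, φP (φP' x) = x ∧ φP' (φP x) = x
  hone : θ 1 = 1
  hmulPos : ∀ m : ℕ, ∀ a ∈ rComponent K n (m : ℤ), ∀ b,
    θ (a * b) = θ a * (⇑φP)^[m] (θ b)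
  hmulNeg : ∀ m : ℕ, ∀ a ∈ rComponent K n (-(m : ℤ)), ∀ b,
    θ (a * b) = θ a * (⇑φP')^[m] (θ b)
  hθe : ∀ i, θ (ee K n i) = ee K n i
  hθg : ∀ i, θ (gg K n i) = ∑ k, P i k * gg K n k

namespace Ctx

variable {K : Type} [Field K] {n : ℕ} (S : Ctx K n)

lemma hP0e (i j : Fin n) : S.P i j ∈ rComponent K n 0 := (S.hP0 i j).1
lemma hP0e' (i j : Fin n) : S.P' i j ∈ rComponent K n 0 := (S.hP0 i j).2

lemma fixP (i j : Fin n) : S.φP (S.P i j) = S.P i j := by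
  have := S.hfix
  rw [← Matrix.ext_iff] at this
  have h := this i j
  rwa [Matrix.map_apply] at h

lemma fixP' (i j : Fin n) : S.φP (S.P' i j) = S.P' i j := by
  set Q := S.P'.map ⇑S.φP with hQ
  have hPQ : S.P * Q = 1 := by
    rw [← Matrix.ext_iff]
    intro i j
    have h1 : ((S.P * S.P' : Matrix _ _ _) i j) = (1 : Matrix (Fin n) (Fin n) (LRose K n)) i j := by
      rw [S.hPP']
    rw [Matrix.mul_apply] at h1
    have h2 := congrArg S.φP h1
    rw [map_sum] at h2
    have h3 : ∀ k, S.φP (S.P i k * S.P' k j) = S.P i k * Q k j := by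
      intro k
      rw [map_mul, S.fixP, hQ, Matrix.map_apply]
    rw [Finset.sum_congr rfl (fun k _ => h3 k)] at h2
    rw [Matrix.mul_apply]
    rw [h2]
    rw [Matrix.one_apply]
    split
    · exact map_one _
    · exact map_zero _
  have hQP' : Q = S.P' := by
    calc Q = (S.P' * S.P) * Q := by rw [S.hP'P, Matrix.one_mul]
    _ = S.P' * (S.P * Q) := by rw [Matrix.mul_assoc]
    _ = S.P' := by rw [hPQ, Matrix.mul_one]
  have := congrArg (fun M : Matrix (Fin n) (Fin n) (LRose K n) => M i j) hQP'
  simpa [hQ, Matrix.map_apply] using this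

lemma fixP_inv (i j : Fin n) : S.φP' (S.P i j) = S.P i j := by
  conv_lhs => rw [← S.fixP i j]
  exact (S.hinv _).2

lemma fixP'_inv (i j : Fin n) : S.φP' (S.P' i j) = S.P' i j := by
  conv_lhs => rw [← S.fixP' i j]
  exact (S.hinv _).2

lemma phiP_graded {d : ℤ} {x : LRose K n} (hx : x ∈ rComponent K n d) :
    S.φP x ∈ rComponent K n d :=
  phi_graded S.hφP S.hP0e S.hP0e' hx

lemma phiP'_graded {d : ℤ} {x : LRose K n} (hx : x ∈ rComponent K n d) :
    S.φP' x ∈ rComponent K n d :=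
  phi_graded S.hφP' S.hP0e' S.hP0e hx

lemma phiP_iter_graded (m : ℕ) {d : ℤ} {x : LRose K n} (hx : x ∈ rComponent K n d) :
    (⇑S.φP)^[m] x ∈ rComponent K n d :=
  phi_iter_graded S.hφP S.hP0e S.hP0e' m hx

lemma phiP'_iter_graded (m : ℕ) {d : ℤ} {x : LRose K n} (hx : x ∈ rComponent K n d) :
    (⇑S.φP')^[m] x ∈ rComponent K n d :=
  phi_iter_graded S.hφP' S.hP0e' S.hP0e m hx

lemma theta_gg_mem (i : Fin n) : S.θ (gg K n i) ∈ rComponent K n (-1) := by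
  rw [S.hθg]
  refine Submodule.sum_mem _ (fun k _ => ?_)
  have := mul_mem_comp (S.hP0e i k) (gg_mem (K := K) (n := n) k)
  simpa using this

lemma theta_Gg_mem (q : List (Fin n)) :
    S.θ (Gg K n q) ∈ rComponent K n (-(q.length : ℤ)) := by
  induction q with
  | nil => rw [Gg_nil, S.hone]; simpa using one_mem0 (K := K) (n := n)
  | cons i q' ih =>
      rw [Gg_cons]
      have hmem : Gg K n q' ∈ rComponent K n (-((q'.length : ℕ) : ℤ)) := Gg_mem q'
      rw [S.hmulNeg q'.length (Gg K n q') hmem (gg K n i)]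
      have h1 : (⇑S.φP')^[q'.length] (S.θ (gg K n i)) ∈ rComponent K n (-1) :=
        S.phiP'_iter_graded _ (S.theta_gg_mem i)
      have := mul_mem_comp ih h1
      have harith : (-(q'.length : ℤ)) + (-1) = -(((i :: q').length : ℕ) : ℤ) := by
        simp [List.length_cons]; ring
      rwa [harith] at this

lemma theta_mono_mem (p q : List (Fin n)) :
    S.θ (Ee K n p * Gg K n q) ∈ rComponent K n ((p.length : ℤ) - q.length) := by
  induction p with
  | nil =>
      rw [Ee_nil, one_mul]
      have := S.theta_Gg_mem q
      have harith : (-(q.length : ℤ)) = (([] : List (Fin n)).length : ℤ) - q.length := by simp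
      rwa [harith] at this
  | cons i p' ih =>
      rw [Ee_cons, mul_assoc]
      have hee1 : ee K n i ∈ rComponent K n ((1 : ℕ) : ℤ) := by
        simpa using ee_mem (K := K) (n := n) i
      rw [S.hmulPos 1 (ee K n i) hee1 (Ee K n p' * Gg K n q)]
      have h1 : (⇑S.φP)^[1] (S.θ (Ee K n p' * Gg K n q))
          ∈ rComponent K n ((p'.length : ℤ) - q.length) := S.phiP_iter_graded _ ih
      have h2 : S.θ (ee K n i) ∈ rComponent K n 1 := by rw [S.hθe]; exact ee_mem i
      have := mul_mem_comp h2 h1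
      have harith : (1 : ℤ) + ((p'.length : ℤ) - q.length)
          = (((i :: p').length : ℕ) : ℤ) - q.length := by
        simp [List.length_cons]; ring
      rwa [harith] at this

lemma theta_graded {d : ℤ} {x : LRose K n} (hx : x ∈ rComponent K n d) :
    S.θ x ∈ rComponent K n d := by
  induction hx using Submodule.span_induction with
  | mem y hy =>
      obtain ⟨p, q, hd, rfl⟩ := hy
      have := S.theta_mono_mem p q
      rw [hd] at this
      exact this
  | zero => rw [map_zero]; exact Submodule.zero_mem _
  | add a b _ _ ha hb => rw [map_add]; exact Submodule.add_mem _ ha hb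
  | smul c a _ ha => rw [map_smul]; exact Submodule.smul_mem _ _ ha

lemma theta_pio (d : ℤ) (x : LRose K n) : pio K n d (S.θ x) = S.θ (pio K n d x) := by
  have hdecomp := decompose_eq (K := K) (n := n) x
  have hSumL : ∀ l : ℤ →₀ LRose K n, SumL K n l = ∑ d' ∈ l.support, l d' := by
    intro l
    rw [SumL, Finsupp.lsum_apply]
    rfl
  have hxs : x = ∑ d' ∈ (ΓA K n x).coeff.support, (ΓA K n x).coeff d' := by
    conv_lhs => rw [← hdecomp]
    rw [hSumL]
  conv_lhs => rw [hxs]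
  conv_rhs => rw [hxs]
  simp only [map_sum]
  refine Finset.sum_congr rfl (fun d' _ => ?_)
  have hm : (ΓA K n x).coeff d' ∈ rComponent K n d' := pio_mem d' x
  rw [pio_of_mem (S.theta_graded hm), pio_of_mem hm]
  split
  · rfl
  · exact (map_zero _).symm

lemma core0 {b : LRose K n} (hb : b ∈ rComponent K n 0) (h0 : S.θ b = 0) : b = 0 := by
  obtain ⟨k, c, hc⟩ := rep_of_mem0 hb
  have hsmul1 : ∀ u v : Fin k → Fin n, c u v • (1 : LRose K n) = 0 := by
    intro u v
    -- compute Gm u * b * Em v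
    have hterm : ∀ u' v' : Fin k → Fin n,
        Gm K n u * (c u' v' • (Em K n u' * Gm K n v')) * Em K n v
        = if u = u' then (if v' = v then c u' v' • (1 : LRose K n) else 0) else 0 := by
      intro u' v'
      rw [mul_smul_comm, smul_mul_assoc]
      have hassoc : Gm K n u * (Em K n u' * Gm K n v') * Em K n v
          = (Gm K n u * Em K n u') * (Gm K n v' * Em K n v) := by
        simp only [mul_assoc]
      rw [hassoc, Gm_mul_Em, Gm_mul_Em]
      by_cases h1 : u = u' <;> by_cases h2 : v' = v <;> simp [h1, h2]
    have hval : Gm K n u * b * Em K n v = c u v • (1 : LRose K n) := by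
      rw [hc]
      simp only [Finset.mul_sum, Finset.sum_mul]
      rw [Finset.sum_congr rfl (fun u' _ => Finset.sum_congr rfl (fun v' _ => hterm u' v'))]
      simp
    have hθz : S.θ (Gm K n u * b * Em K n v) = 0 := by
      rw [mul_assoc]
      have hGmmem : Gm K n u ∈ rComponent K n (-(k : ℤ)) := Gm_mem u
      rw [S.hmulNeg k (Gm K n u) hGmmem (b * Em K n v)]
      have hb0 : b ∈ rComponent K n ((0 : ℕ) : ℤ) := by simpa using hb
      rw [S.hmulPos 0 b hb0 (Em K n v), h0, zero_mul, iter_map_zero, mul_zero]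
    rw [hval] at hθz
    rw [map_smul, S.hone] at hθz
    exact hθz
  rw [hc]
  refine Finset.sum_eq_zero (fun u _ => Finset.sum_eq_zero (fun v _ => ?_))
  have : c u v • (Em K n u * Gm K n v) = (c u v • (1 : LRose K n)) * (Em K n u * Gm K n v) := by
    rw [smul_mul_assoc, one_mul]
  rw [this, hsmul1, zero_mul]

lemma homogZero (hn : 2 ≤ n) :
    ∀ (N : ℕ) (d : ℤ), d.natAbs = N → ∀ b ∈ rComponent K n d, S.θ b = 0 → b = 0 := by
  intro N
  induction N with
  | zero =>
      intro d hd b hb h0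
      have : d = 0 := by omega
      subst this
      exact S.core0 hb h0
  | succ N ih =>
      intro d hd b hb h0
      rcases lt_trichotomy d 0 with hneg | hzero | hpos
      · -- negative degree : left-multiply by ee
        have j0 : Fin n := ⟨0, by omega⟩
        have hb' : ee K n j0 * b ∈ rComponent K n (1 + d) := by
          have := mul_mem_comp (ee_mem (K := K) (n := n) j0) hb
          exact this
        have hθ' : S.θ (ee K n j0 * b) = 0 := by
          have hee1 : ee K n j0 ∈ rComponent K n ((1 : ℕ) : ℤ) := by
            simpa using ee_mem (K := K) (n := n) j0
          rw [S.hmulPos 1 (ee K n j0) hee1 b, h0, iter_map_zero, mul_zero]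
        have hzero' : ee K n j0 * b = 0 := ih (1 + d) (by omega) _ hb' hθ'
        calc b = (gg K n j0 * ee K n j0) * b := by rw [rel1, one_mul]
        _ = gg K n j0 * (ee K n j0 * b) := by rw [mul_assoc]
        _ = 0 := by rw [hzero', mul_zero]
      · omega
      · -- positive degree : b = Σ ee j * (gg j * b)
        have hexp : b = ∑ j : Fin n, ee K n j * (gg K n j * b) := by
          calc b = 1 * b := (one_mul b).symm
          _ = (∑ j : Fin n, ee K n j * gg K n j) * b := by rw [rel3]
          _ = ∑ j : Fin n, ee K n j * gg K n j * b := by rw [Finset.sum_mul]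
          _ = ∑ j : Fin n, ee K n j * (gg K n j * b) := by
                refine Finset.sum_congr rfl (fun j _ => ?_)
                rw [mul_assoc]
        have hzero' : ∀ j : Fin n, gg K n j * b = 0 := by
          intro j
          have hb' : gg K n j * b ∈ rComponent K n (-1 + d) :=
            mul_mem_comp (gg_mem (K := K) (n := n) j) hb
          have hθ' : S.θ (gg K n j * b) = 0 := by
            have hgg1 : gg K n j ∈ rComponent K n (-((1 : ℕ) : ℤ)) := by
              simpa using gg_mem (K := K) (n := n) j
            rw [S.hmulNeg 1 (gg K n j) hgg1 b, h0, iter_map_zero, mul_zero]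
          exact ih (-1 + d) (by omega) _ hb' hθ'
        rw [hexp]
        refine Finset.sum_eq_zero (fun j _ => ?_)
        rw [hzero' j, mul_zero]

lemma injective (hn : 2 ≤ n) : Function.Injective ⇑S.θ := by
  have hker : ∀ a, S.θ a = 0 → a = 0 := by
    intro a ha
    refine eq_zero_of_pio (fun d => ?_)
    have h1 : S.θ (pio K n d a) = 0 := by
      rw [← S.theta_pio, ha, map_zero]
    exact S.homogZero hn d.natAbs d rfl _ (pio_mem d a) h1
  intro x y hxy
  have : S.θ (x - y) = 0 := by rw [map_sub, hxy, sub_self]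
  exact sub_eq_zero.mp (hker _ this)

def Good (x : LRose K n) : Prop :=
  (∃ c ∈ rComponent K n 0, S.θ c = x) ∧ S.φP x = x

lemma good_one : S.Good 1 :=
  ⟨⟨1, one_mem0, S.hone⟩, map_one _⟩

lemma good_mul {x y : LRose K n} (hx : S.Good x) (hy : S.Good y) : S.Good (x * y) := by
  obtain ⟨⟨c1, hc1, hθ1⟩, hφ1⟩ := hx
  obtain ⟨⟨c2, hc2, hθ2⟩, hφ2⟩ := hy
  refine ⟨⟨c1 * c2, by simpa using mul_mem_comp hc1 hc2, ?_⟩, by rw [map_mul, hφ1, hφ2]⟩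
  have hc1' : c1 ∈ rComponent K n ((0 : ℕ) : ℤ) := by simpa using hc1
  rw [S.hmulPos 0 c1 hc1' c2, Function.iterate_zero, id_eq, hθ1, hθ2]

lemma good_phi' {x : LRose K n} (hx : S.Good x) : S.φP' x = x := by
  conv_lhs => rw [← hx.2]
  exact (S.hinv x).2

lemma good_P (hr : ∀ i j, S.P i j ∈ Set.range ⇑S.θ ∧ S.P' i j ∈ Set.range ⇑S.θ)
    (i j : Fin n) : S.Good (S.P i j) := by
  obtain ⟨a, ha⟩ := (hr i j).1
  refine ⟨⟨pio K n 0 a, pio_mem 0 a, ?_⟩, S.fixP i j⟩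
  rw [← S.theta_pio, ha, pio_of_mem (S.hP0e i j), if_pos rfl]

lemma good_P' (hr : ∀ i j, S.P i j ∈ Set.range ⇑S.θ ∧ S.P' i j ∈ Set.range ⇑S.θ)
    (i j : Fin n) : S.Good (S.P' i j) := by
  obtain ⟨a, ha⟩ := (hr i j).2
  refine ⟨⟨pio K n 0 a, pio_mem 0 a, ?_⟩, S.fixP' i j⟩
  rw [← S.theta_pio, ha, pio_of_mem (S.hP0e' i j), if_pos rfl]

def FeS : Set (LRose K n) := {y | ∃ d k b, S.Good d ∧ S.Good b ∧ y = d * ee K n k * b}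
def FgS : Set (LRose K n) := {y | ∃ d k b, S.Good d ∧ S.Good b ∧ y = d * gg K n k * b}

lemma span_Fe_phi' (hr : ∀ i j, S.P i j ∈ Set.range ⇑S.θ ∧ S.P' i j ∈ Set.range ⇑S.θ)
    {x : LRose K n} (hx : x ∈ Submodule.span K S.FeS) :
    S.φP' x ∈ Submodule.span K S.FeS := by
  induction hx using Submodule.span_induction with
  | mem y hy =>
      obtain ⟨d, k, b, hd, hb, rfl⟩ := hy
      rw [map_mul, map_mul, S.good_phi' hd, S.good_phi' hb, S.hφP'.1 k]
      have hexp : d * (∑ r, ee K n r * S.P' r k) * b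
          = ∑ r, d * ee K n r * (S.P' r k * b) := by
        rw [Finset.mul_sum, Finset.sum_mul]
        refine Finset.sum_congr rfl (fun r _ => ?_)
        simp only [mul_assoc]
      rw [hexp]
      refine Submodule.sum_mem _ (fun r _ => ?_)
      exact Submodule.subset_span ⟨d, r, S.P' r k * b, hd,
        S.good_mul (S.good_P' hr r k) hb, rfl⟩
  | zero => rw [map_zero]; exact Submodule.zero_mem _
  | add a b _ _ ha hb => rw [map_add]; exact Submodule.add_mem _ ha hb
  | smul c a _ ha => rw [map_smul]; exact Submodule.smul_mem _ _ ha

lemma span_Fg_phi (hr : ∀ i j, S.P i j ∈ Set.range ⇑S.θ ∧ S.P' i j ∈ Set.range ⇑S.θ)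
    {x : LRose K n} (hx : x ∈ Submodule.span K S.FgS) :
    S.φP x ∈ Submodule.span K S.FgS := by
  induction hx using Submodule.span_induction with
  | mem y hy =>
      obtain ⟨d, k, b, hd, hb, rfl⟩ := hy
      rw [map_mul, map_mul, hd.2, hb.2, S.hφP.2 k]
      have hexp : d * (∑ r, S.P' k r * gg K n r) * b
          = ∑ r, (d * S.P' k r) * gg K n r * b := by
        rw [Finset.mul_sum, Finset.sum_mul]
        refine Finset.sum_congr rfl (fun r _ => ?_)
        simp only [mul_assoc]
      rw [hexp]
      refine Submodule.sum_mem _ (fun r _ => ?_)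
      exact Submodule.subset_span ⟨d * S.P' k r, r, b,
        S.good_mul hd (S.good_P' hr k r), hb, rfl⟩
  | zero => rw [map_zero]; exact Submodule.zero_mem _
  | add a b _ _ ha hb => rw [map_add]; exact Submodule.add_mem _ ha hb
  | smul c a _ ha => rw [map_smul]; exact Submodule.smul_mem _ _ ha

lemma span_Fg_phi' (hr : ∀ i j, S.P i j ∈ Set.range ⇑S.θ ∧ S.P' i j ∈ Set.range ⇑S.θ)
    {x : LRose K n} (hx : x ∈ Submodule.span K S.FgS) :
    S.φP' x ∈ Submodule.span K S.FgS := by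
  induction hx using Submodule.span_induction with
  | mem y hy =>
      obtain ⟨d, k, b, hd, hb, rfl⟩ := hy
      rw [map_mul, map_mul, S.good_phi' hd, S.good_phi' hb, S.hφP'.2 k]
      have hexp : d * (∑ r, S.P k r * gg K n r) * b
          = ∑ r, (d * S.P k r) * gg K n r * b := by
        rw [Finset.mul_sum, Finset.sum_mul]
        refine Finset.sum_congr rfl (fun r _ => ?_)
        simp only [mul_assoc]
      rw [hexp]
      refine Submodule.sum_mem _ (fun r _ => ?_)
      exact Submodule.subset_span ⟨d * S.P k r, r, b,
        S.good_mul hd (S.good_P hr k r), hb, rfl⟩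
  | zero => rw [map_zero]; exact Submodule.zero_mem _
  | add a b _ _ ha hb => rw [map_add]; exact Submodule.add_mem _ ha hb
  | smul c a _ ha => rw [map_smul]; exact Submodule.smul_mem _ _ ha

lemma phi_phi'_prod (L : List (LRose K n)) :
    S.φP ((L.map ⇑S.φP').prod) = L.prod := by
  rw [map_list_prod, List.map_map]
  congr 1
  have h : (⇑S.φP ∘ ⇑S.φP') = id := funext (fun x => (S.hinv x).1)
  rw [h, List.map_id]

lemma phi'_phi_prod (L : List (LRose K n)) :
    S.φP' ((L.map ⇑S.φP).prod) = L.prod := by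
  rw [map_list_prod, List.map_map]
  congr 1
  have h : (⇑S.φP' ∘ ⇑S.φP) = id := funext (fun x => (S.hinv x).2)
  rw [h, List.map_id]

lemma sumP'w (k : Fin n) :
    ∑ r, S.P' k r * S.θ (gg K n r) = gg K n k := by
  have h1 : ∀ r, S.P' k r * S.θ (gg K n r) = ∑ s, S.P' k r * S.P r s * gg K n s := by
    intro r
    rw [S.hθg r, Finset.mul_sum]
    refine Finset.sum_congr rfl (fun s _ => ?_)
    rw [mul_assoc]
  rw [Finset.sum_congr rfl (fun r _ => h1 r), Finset.sum_comm]
  have h2 : ∀ s, ∑ r, S.P' k r * S.P r s * gg K n s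
      = ((S.P' * S.P : Matrix _ _ _) k s) * gg K n s := by
    intro s
    rw [Matrix.mul_apply, Finset.sum_mul]
  rw [Finset.sum_congr rfl (fun s _ => h2 s), S.hP'P]
  have h3 : ∀ s, ((1 : Matrix (Fin n) (Fin n) (LRose K n)) k s) * gg K n s
      = if k = s then gg K n s else 0 := by
    intro s
    rw [Matrix.one_apply]
    split
    · rw [one_mul]
    · rw [zero_mul]
  rw [Finset.sum_congr rfl (fun s _ => h3 s), Finset.sum_ite_eq]
  simp

lemma main (hn : 2 ≤ n)
    (hr : ∀ i j, S.P i j ∈ Set.range ⇑S.θ ∧ S.P' i j ∈ Set.range ⇑S.θ) :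
    ∀ (m l : ℕ) (L1 L2 : List (LRose K n)), L1.length = m → L2.length = l →
    (∀ f ∈ L1, f ∈ Submodule.span K S.FeS) → (∀ f ∈ L2, f ∈ Submodule.span K S.FgS) →
    ∀ x : LRose K n, S.Good x →
    x * (L1.prod * L2.prod) ∈ Submodule.map S.θ (rComponent K n ((m : ℤ) - l)) := by
  intro m
  induction m with
  | zero =>
      intro l
      induction l with
      | zero =>
          intro L1 L2 h1 h2 _ _ x hx
          have hL1 : L1 = [] := List.length_eq_zero_iff.mp h1
          have hL2 : L2 = [] := List.length_eq_zero_iff.mp h2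
          subst hL1; subst hL2
          simp only [List.prod_nil, mul_one]
          obtain ⟨⟨c, hc, hθc⟩, _⟩ := hx
          exact ⟨c, by simpa using hc, hθc⟩
      | succ l ihl =>
          intro L1 L2 h1 h2 hF1 hF2 x hx
          have hL1 : L1 = [] := List.length_eq_zero_iff.mp h1
          subst hL1
          cases L2 with
          | nil => simp at h2
          | cons f L2' =>
              have hf : f ∈ Submodule.span K S.FgS := hF2 f List.mem_cons_self
              have hF2' : ∀ g ∈ L2', g ∈ Submodule.span K S.FgS :=
                fun g hg => hF2 g (List.mem_cons_of_mem f hg)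
              have hlen2 : L2'.length = l := by
                simpa using h2
              simp only [List.prod_nil, one_mul, List.prod_cons]
              clear h2 hF2
              induction hf using Submodule.span_induction with
              | mem y hy =>
                  obtain ⟨d0, k, b0, hd, hb, rfl⟩ := hy
                  -- apply inner IH to mapped list
                  have hmaps : ∀ g ∈ L2'.map ⇑S.φP, g ∈ Submodule.span K S.FgS := by
                    intro g hg
                    obtain ⟨g0, hg0, rfl⟩ := List.mem_map.mp hg
                    exact S.span_Fg_phi hr (hF2' g0 hg0)
                  have hIH := ihl [] (L2'.map ⇑S.φP) rfl
                    (by simpa using hlen2) (by simp) hmaps b0 hb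
                  obtain ⟨a', ha'C, ha'θ⟩ := hIH
                  simp only [List.prod_nil, one_mul] at ha'θ
                  have hphi' : S.φP' (S.θ a') = b0 * L2'.prod := by
                    rw [ha'θ, map_mul, S.good_phi' hb, S.phi'_phi_prod]
                  have hval : (∑ r, (x * d0 * S.P' k r) *
                        (S.θ (gg K n r) * (b0 * L2'.prod)))
                      = x * (d0 * gg K n k * b0 * L2'.prod) := by
                    have e1 : ∀ r : Fin n, (x * d0 * S.P' k r) *
                          (S.θ (gg K n r) * (b0 * L2'.prod))
                        = (x * d0) * (S.P' k r * S.θ (gg K n r)) * (b0 * L2'.prod) := by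
                      intro r
                      simp only [mul_assoc]
                    rw [Finset.sum_congr rfl (fun r _ => e1 r), ← Finset.sum_mul,
                      ← Finset.mul_sum, S.sumP'w]
                    simp only [mul_assoc]
                  rw [← hval]
                  refine Submodule.sum_mem _ (fun r _ => ?_)
                  obtain ⟨cr, hcr, hθcr⟩ :=
                    (S.good_mul (S.good_mul hx hd) (S.good_P' hr k r)).1
                  refine ⟨cr * (gg K n r * a'), ?_, ?_⟩
                  · have hm := mul_mem_comp hcr
                      (mul_mem_comp (gg_mem (K := K) (n := n) r) ha'C)
                    have harith : (0 : ℤ) + (-1 + (((0 : ℕ) : ℤ) - ((l : ℕ) : ℤ)))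
                        = (((0 : ℕ) : ℤ) - ((l + 1 : ℕ) : ℤ)) := by push_cast; ring
                    rwa [harith] at hm
                  · have hcr0 : cr ∈ rComponent K n ((0 : ℕ) : ℤ) := by simpa using hcr
                    rw [S.hmulPos 0 cr hcr0 (gg K n r * a'), Function.iterate_zero,
                      id_eq, hθcr]
                    have hgg1 : gg K n r ∈ rComponent K n (-((1 : ℕ) : ℤ)) := by
                      simpa using gg_mem (K := K) (n := n) r
                    rw [S.hmulNeg 1 (gg K n r) hgg1 a', Function.iterate_one, hphi']
              | zero => simp only [zero_mul, mul_zero]; exact Submodule.zero_mem _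
              | add a b _ _ ha hb =>
                  have : x * ((a + b) * L2'.prod)
                      = x * (a * L2'.prod) + x * (b * L2'.prod) := by
                    rw [add_mul, mul_add]
                  rw [this]
                  exact Submodule.add_mem _ ha hb
              | smul t a _ ha =>
                  have : x * ((t • a) * L2'.prod) = t • (x * (a * L2'.prod)) := by
                    rw [smul_mul_assoc, mul_smul_comm]
                  rw [this]
                  exact Submodule.smul_mem _ _ ha
  | succ m ihm =>
      intro l L1 L2 h1 h2 hF1 hF2 x hx
      cases L1 with
      | nil => simp at h1
      | cons f L1' =>
          have hf : f ∈ Submodule.span K S.FeS := hF1 f List.mem_cons_self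
          have hF1' : ∀ g ∈ L1', g ∈ Submodule.span K S.FeS :=
            fun g hg => hF1 g (List.mem_cons_of_mem f hg)
          have hlen1 : L1'.length = m := by simpa using h1
          simp only [List.prod_cons]
          clear h1 hF1
          induction hf using Submodule.span_induction with
          | mem y hy =>
              obtain ⟨d0, k, b0, hd, hb, rfl⟩ := hy
              have hmaps1 : ∀ g ∈ L1'.map ⇑S.φP', g ∈ Submodule.span K S.FeS := by
                intro g hg
                obtain ⟨g0, hg0, rfl⟩ := List.mem_map.mp hg
                exact S.span_Fe_phi' hr (hF1' g0 hg0)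
              have hmaps2 : ∀ g ∈ L2.map ⇑S.φP', g ∈ Submodule.span K S.FgS := by
                intro g hg
                obtain ⟨g0, hg0, rfl⟩ := List.mem_map.mp hg
                exact S.span_Fg_phi' hr (hF2 g0 hg0)
              have hIH := ihm l (L1'.map ⇑S.φP') (L2.map ⇑S.φP')
                (by simpa using hlen1) (by simpa using h2) hmaps1 hmaps2 b0 hb
              obtain ⟨a', ha'C, ha'θ⟩ := hIH
              have hphi : S.φP (S.θ a') = b0 * (L1'.prod * L2.prod) := by
                rw [ha'θ, map_mul, hb.2, map_mul, S.phi_phi'_prod, S.phi_phi'_prod]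
              obtain ⟨c, hc, hθc⟩ := (S.good_mul hx hd).1
              refine ⟨c * (ee K n k * a'), ?_, ?_⟩
              · have hm2 := mul_mem_comp hc
                  (mul_mem_comp (ee_mem (K := K) (n := n) k) ha'C)
                have harith : (0 : ℤ) + (1 + (((m : ℕ) : ℤ) - ((l : ℕ) : ℤ)))
                    = (((m + 1 : ℕ) : ℤ) - ((l : ℕ) : ℤ)) := by push_cast; ring
                rwa [harith] at hm2
              · have hc0 : c ∈ rComponent K n ((0 : ℕ) : ℤ) := by simpa using hc
                rw [S.hmulPos 0 c hc0 (ee K n k * a'), Function.iterate_zero, id_eq, hθc]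
                have hee1 : ee K n k ∈ rComponent K n ((1 : ℕ) : ℤ) := by
                  simpa using ee_mem (K := K) (n := n) k
                rw [S.hmulPos 1 (ee K n k) hee1 a', Function.iterate_one, S.hθe, hphi]
                simp only [mul_assoc]
          | zero => simp only [zero_mul, mul_zero]; exact Submodule.zero_mem _
          | add a b _ _ ha hb =>
              have : x * ((a + b) * L1'.prod * L2.prod)
                  = x * (a * L1'.prod * L2.prod) + x * (b * L1'.prod * L2.prod) := by
                rw [add_mul, add_mul, mul_add]
              rw [this]
              exact Submodule.add_mem _ ha hb
          | smul t a _ ha =>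
              have : x * ((t • a) * L1'.prod * L2.prod)
                  = t • (x * (a * L1'.prod * L2.prod)) := by
                rw [smul_mul_assoc, smul_mul_assoc, mul_smul_comm]
              rw [this]
              exact Submodule.smul_mem _ _ ha

end Ctx

end S14


/-- Let `P ∈ GL_n(L_K(R_n)_0)` with `φ_P(P) = P` (so `φ_P` is a graded
automorphism with inverse `φ_{P^{-1}}`).  The homomorphism
`θ_P : L_K(R_n) → L_K(R_n)^{φ_P}` determined by `θ_P(1) = 1`, `θ_P(e_i) = e_i`,
`θ_P(e_i*) = Σ_k p_{ik} e_k*` is an isomorphism iff all `p_{ij}` and `p^{(-1)}_{ij}` lie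
in its image. -/
theorem stmt14 (K : Type) [Field K] (n : ℕ) (hn : 2 ≤ n)
    (P P' : Matrix (Fin n) (Fin n) (LRose K n))
    (hP0 : ∀ i j, P i j ∈ rComponent K n 0 ∧ P' i j ∈ rComponent K n 0)
    (hPP' : P * P' = 1) (hP'P : P' * P = 1)
    (φP φP' : LRose K n →ₐ[K] LRose K n)
    (hφP : RPhiProps K n P P' φP) (hφP' : RPhiProps K n P' P φP')
    (hfix : P.map ⇑φP = P)
    (hinv : ∀ x, φP (φP' x) = x ∧ φP' (φP x) = x)
    (θ : LRose K n →ₗ[K] LRose K n)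
    (hone : θ 1 = 1)
    (hmulPos : ∀ m : ℕ, ∀ a ∈ rComponent K n (m : ℤ), ∀ b,
      θ (a * b) = θ a * (⇑φP)^[m] (θ b))
    (hmulNeg : ∀ m : ℕ, ∀ a ∈ rComponent K n (-(m : ℤ)), ∀ b,
      θ (a * b) = θ a * (⇑φP')^[m] (θ b))
    (hθe : ∀ i, θ (ee K n i) = ee K n i)
    (hθg : ∀ i, θ (gg K n i) = ∑ k, P i k * gg K n k) :
    Function.Bijective ⇑θ ↔
      ∀ i j, P i j ∈ Set.range ⇑θ ∧ P' i j ∈ Set.range ⇑θ := by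
  classical
  let S : S14.Ctx K n := ⟨P, P', φP, φP', θ, hP0, hPP', hP'P, hφP, hφP', hfix, hinv,
    hone, hmulPos, hmulNeg, hθe, hθg⟩
  constructor
  · intro hbij i j
    exact ⟨hbij.2 (P i j), hbij.2 (P' i j)⟩
  · intro hr
    have hr' : ∀ i j, S.P i j ∈ Set.range ⇑S.θ ∧ S.P' i j ∈ Set.range ⇑S.θ := hr
    refine ⟨S.injective hn, ?_⟩
    intro y
    have hy := S14.span_top (K := K) (n := n) y
    have hle : Submodule.span K {z : LRose K n | ∃ p q : List (Fin n),
        z = S14.Ee K n p * S14.Gg K n q} ≤ LinearMap.range S.θ := by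
      rw [Submodule.span_le]
      rintro z ⟨p, q, rfl⟩
      have hFe : ∀ f ∈ p.map (ee K n), f ∈ Submodule.span K S.FeS := by
        intro f hf
        obtain ⟨i, _, rfl⟩ := List.mem_map.mp hf
        exact Submodule.subset_span ⟨1, i, 1, S.good_one, S.good_one,
          by rw [one_mul, mul_one]⟩
      have hFg : ∀ f ∈ q.reverse.map (gg K n), f ∈ Submodule.span K S.FgS := by
        intro f hf
        obtain ⟨i, _, rfl⟩ := List.mem_map.mp hf
        exact Submodule.subset_span ⟨1, i, 1, S.good_one, S.good_one,
          by rw [one_mul, mul_one]⟩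
      have hm := S.main hn hr' (p.map (ee K n)).length ((q.reverse.map (gg K n)).length)
        (p.map (ee K n)) (q.reverse.map (gg K n)) rfl rfl hFe hFg 1 S.good_one
      obtain ⟨a, _, ha⟩ := hm
      rw [one_mul] at ha
      exact ⟨a, ha⟩
    obtain ⟨a, ha⟩ := hle hy
    exact ⟨a, ha⟩
end

section
/- Let n ≥ 2 be an integer, K a field, and R_n the rose graph with n petals. For every P ∈ GL_n(K), the K-algebra homomorphism θ_P : L_K(R_n) → L_K(R_n)^{φ_P}, defined by θ_P(v) = v, θ_P(e_i) = e_i and θ_P(e_i*) = Σ_{k=1}^n p_{ik} e_k*, is an isomorphism; in other words, the Zhang twist of L_K(R_n) by the graded automorphism φ_P is isomorphic to L_K(R_n). -/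
section Aux

variable {K : Type} [Field K] {n : ℕ}

/-- quotient map -/
noncomputable abbrev piR (K : Type) [Field K] (n : ℕ) :
    FreeAlgebra K (RGen n) →ₐ[K] LRose K n :=
  RingQuot.mkAlgHom K (RoseRel K n)

lemma piR_quot (a : FreeAlgebra K (RGen n)) : piR K n a = ⟨Quot.mk _ a⟩ := by
  have h1 := RingQuot.mkAlgHom_coe K (RoseRel K n)
  have h2 : piR K n a = RingQuot.mkRingHom (RoseRel K n) a := by
    rw [← h1]; rfl
  rw [h2, RingQuot.mkRingHom_def]; rfl

/-- a `single` with the `MonoidAlgebra` type ascribed -/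
noncomputable def sg (K : Type) [Field K] (n : ℕ) (w : FreeMonoid (RGen n)) (c : K) :
    MonoidAlgebra K (FreeMonoid (RGen n)) :=
  MonoidAlgebra.single w c

/-- the equivalence with the monoid algebra on the free monoid -/
noncomputable abbrev EA (K : Type) [Field K] (n : ℕ) :
    FreeAlgebra K (RGen n) ≃ₐ[K] MonoidAlgebra K (FreeMonoid (RGen n)) :=
  FreeAlgebra.equivMonoidAlgebraFreeMonoid

lemma EA_ι (c : RGen n) :
    EA K n (FreeAlgebra.ι K c) = sg K n (FreeMonoid.of c) 1 := by
  simp [EA, sg, FreeAlgebra.equivMonoidAlgebraFreeMonoid, MonoidAlgebra.of_apply]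

/-- word in the free algebra -/
noncomputable def fw (K : Type) [Field K] (n : ℕ) (l : List (RGen n)) :
    FreeAlgebra K (RGen n) :=
  (l.map (FreeAlgebra.ι K)).prod

lemma sg_one : sg K n 1 1 = 1 := (MonoidAlgebra.one_def).symm

lemma sg_mul (w w' : FreeMonoid (RGen n)) (c c' : K) :
    sg K n w c * sg K n w' c' = sg K n (w * w') (c * c') :=
  MonoidAlgebra.single_mul_single _ _ _ _

lemma sg_smul (w : FreeMonoid (RGen n)) (c c' : K) :
    c • sg K n w c' = sg K n w (c * c') :=
  MonoidAlgebra.smul_single' c w c'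

lemma EA_symm_word (l : List (RGen n)) :
    (EA K n).symm (sg K n (FreeMonoid.ofList l) 1) = fw K n l := by
  induction l with
  | nil =>
    have h0 : sg K n (FreeMonoid.ofList ([] : List (RGen n))) 1 = 1 := sg_one
    rw [h0, map_one]; rfl
  | cons c l ih =>
    have h1 : (FreeMonoid.ofList (c :: l) : FreeMonoid (RGen n))
        = FreeMonoid.of c * FreeMonoid.ofList l := rfl
    have h2 : sg K n (FreeMonoid.of c * FreeMonoid.ofList l) 1
        = sg K n (FreeMonoid.of c) 1 * sg K n (FreeMonoid.ofList l) 1 := by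
      rw [sg_mul, one_mul]
    rw [h1, h2, map_mul, ih]
    have h3 : (EA K n).symm (sg K n (FreeMonoid.of c) 1) = FreeAlgebra.ι K c := by
      rw [← EA_ι, AlgEquiv.symm_apply_apply]
    rw [h3]
    simp [fw]

lemma EA_symm_single (w : FreeMonoid (RGen n)) (k : K) :
    (EA K n).symm (sg K n w k) = k • fw K n (FreeMonoid.toList w) := by
  have h : sg K n w k = k • sg K n w 1 := by rw [sg_smul, mul_one]
  rw [h, map_smul]
  congr 1
  exact EA_symm_word (FreeMonoid.toList w)

/-- induction over the free algebra by words -/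
lemma freeAlgebra_induction (p : FreeAlgebra K (RGen n) → Prop)
    (h0 : p 0) (hadd : ∀ x y, p x → p y → p (x + y))
    (hsmul : ∀ (c : K) x, p x → p (c • x))
    (hw : ∀ l : List (RGen n), p (fw K n l)) (x : FreeAlgebra K (RGen n)) : p x := by
  have key : ∀ y : MonoidAlgebra K (FreeMonoid (RGen n)), p ((EA K n).symm y) := by
    intro y
    induction y using MonoidAlgebra.induction with
    | zero => simpa using h0
    | single_add a b f _ _ ih =>
      let fM : MonoidAlgebra K (FreeMonoid (RGen n)) := f
      show p ((EA K n).symm (sg K n a b + fM))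
      rw [map_add, EA_symm_single]
      exact hadd _ _ (hsmul _ _ (hw _)) ih
  have := key (EA K n x)
  rwa [AlgEquiv.symm_apply_apply] at this

/-- word in `LRose` -/
noncomputable def lw (K : Type) [Field K] (n : ℕ) (l : List (RGen n)) : LRose K n :=
  piR K n (fw K n l)

lemma lw_nil : lw K n [] = 1 := by simp [lw, fw]

lemma lw_cons_e (i : Fin n) (l : List (RGen n)) :
    lw K n (RGen.e i :: l) = ee K n i * lw K n l := by
  simp [lw, fw, ee]

lemma lw_cons_g (i : Fin n) (l : List (RGen n)) :
    lw K n (RGen.g i :: l) = gg K n i * lw K n l := by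
  simp [lw, fw, gg]

lemma lrose_hom_ext {f g : LRose K n →ₗ[K] LRose K n}
    (h : ∀ l : List (RGen n), f (lw K n l) = g (lw K n l)) : ∀ x, f x = g x := by
  intro x
  obtain ⟨a, rfl⟩ := RingQuot.mkAlgHom_surjective K (RoseRel K n) x
  refine freeAlgebra_induction (fun a => f (piR K n a) = g (piR K n a)) ?_ ?_ ?_ h a
  · simp
  · intro x y hx hy; simp [map_add, hx, hy]
  · intro c x hx; simp [map_smul, hx]

/-- relations in LRose -/
lemma lr_ge_same (i : Fin n) : gg K n i * ee K n i = 1 := by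
  rw [gg, ee, ← map_mul, ← map_one (RingQuot.mkAlgHom K (RoseRel K n))]
  exact RingQuot.mkAlgHom_rel K (RoseRel.ghostEdgeSame i)

lemma lr_ge_ne {i j : Fin n} (h : i ≠ j) : gg K n i * ee K n j = 0 := by
  rw [gg, ee, ← map_mul, ← map_zero (RingQuot.mkAlgHom K (RoseRel K n))]
  exact RingQuot.mkAlgHom_rel K (RoseRel.ghostEdgeNe i j h)

lemma lr_ck2 : ∑ i : Fin n, ee K n i * gg K n i = 1 := by
  have := RingQuot.mkAlgHom_rel K (RoseRel.ck2 (K := K) (n := n))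
  rw [map_sum, map_one] at this
  simpa [ee, gg, map_mul] using this

end Aux

section Aux2

variable {K : Type} [Field K] {n : ℕ}

/-- The value of the inverse map on a word. -/
noncomputable def Wf (φ φ' : LRose K n →ₐ[K] LRose K n) : List (RGen n) → LRose K n
  | [] => 1
  | .e i :: l => ee K n i * φ' (Wf φ φ' l)
  | .g i :: l => φ (gg K n i) * φ (Wf φ φ' l)

/-- The inverse map on the free algebra. -/
noncomputable def rhoF (φ φ' : LRose K n →ₐ[K] LRose K n) :
    FreeAlgebra K (RGen n) →ₗ[K] LRose K n :=
  (Finsupp.linearCombination K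
      (fun w : FreeMonoid (RGen n) => Wf φ φ' (FreeMonoid.toList w))).comp
    ((MonoidAlgebra.coeffLinearEquiv K).toLinearMap.comp (EA K n).toLinearMap)

variable (φ φ' : LRose K n →ₐ[K] LRose K n)

lemma rhoF_sg (w : FreeMonoid (RGen n)) (k : K) :
    rhoF φ φ' ((EA K n).symm (sg K n w k)) = k • Wf φ φ' (FreeMonoid.toList w) := by
  have h1 : rhoF φ φ' ((EA K n).symm (sg K n w k))
      = Finsupp.linearCombination K
          (fun w : FreeMonoid (RGen n) => Wf φ φ' (FreeMonoid.toList w))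
          (EA K n ((EA K n).symm (sg K n w k))).coeff := rfl
  rw [h1, AlgEquiv.apply_symm_apply]
  exact Finsupp.linearCombination_single (R := K)
    (v := fun w : FreeMonoid (RGen n) => Wf φ φ' (FreeMonoid.toList w)) k w

lemma rhoF_one : rhoF φ φ' 1 = 1 := by
  have h : (1 : FreeAlgebra K (RGen n)) = (EA K n).symm (sg K n 1 1) := by
    rw [sg_one, map_one]
  rw [h, rhoF_sg]
  show (1 : K) • Wf φ φ' [] = 1
  rw [Wf, one_smul]

lemma rhoF_e_mul (i : Fin n) (x : FreeAlgebra K (RGen n)) :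
    rhoF φ φ' (FreeAlgebra.ι K (RGen.e i) * x) = ee K n i * φ' (rhoF φ φ' x) := by
  have key : ∀ y : MonoidAlgebra K (FreeMonoid (RGen n)),
      rhoF φ φ' (FreeAlgebra.ι K (RGen.e i) * (EA K n).symm y)
        = ee K n i * φ' (rhoF φ φ' ((EA K n).symm y)) := by
    intro y
    induction y using MonoidAlgebra.induction with
    | zero =>
      show rhoF φ φ' (FreeAlgebra.ι K (RGen.e i)
          * (EA K n).symm (0 : MonoidAlgebra K (FreeMonoid (RGen n))))
        = ee K n i * φ' (rhoF φ φ' ((EA K n).symm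
            (0 : MonoidAlgebra K (FreeMonoid (RGen n)))))
      simp
    | single_add a b f _ _ ih =>
      let fM : MonoidAlgebra K (FreeMonoid (RGen n)) := f
      show rhoF φ φ' (FreeAlgebra.ι K (RGen.e i) * (EA K n).symm (sg K n a b + fM))
        = ee K n i * φ' (rhoF φ φ' ((EA K n).symm (sg K n a b + fM)))
      have hsingle : FreeAlgebra.ι K (RGen.e i) * (EA K n).symm (sg K n a b)
          = (EA K n).symm (sg K n (FreeMonoid.of (RGen.e i) * a) b) := by
        have hι : FreeAlgebra.ι K (RGen.e i)
            = (EA K n).symm (sg K n (FreeMonoid.of (RGen.e i)) 1) := by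
          rw [← EA_ι, AlgEquiv.symm_apply_apply]
        rw [hι, ← map_mul, sg_mul, one_mul]
      have htl : FreeMonoid.toList (FreeMonoid.of (RGen.e i) * a)
          = RGen.e i :: FreeMonoid.toList a := rfl
      have hL : rhoF φ φ' (FreeAlgebra.ι K (RGen.e i) * (EA K n).symm (sg K n a b + fM))
          = b • Wf φ φ' (RGen.e i :: FreeMonoid.toList a)
            + rhoF φ φ' (FreeAlgebra.ι K (RGen.e i) * (EA K n).symm fM) := by
        rw [map_add, mul_add, map_add, hsingle, rhoF_sg, htl]
      have hR : φ' (rhoF φ φ' ((EA K n).symm (sg K n a b + fM)))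
          = b • φ' (Wf φ φ' (FreeMonoid.toList a)) + φ' (rhoF φ φ' ((EA K n).symm fM)) := by
        rw [map_add, map_add, rhoF_sg, map_add, map_smul]
      rw [hL, hR, mul_add, ih]
      congr 1
      show b • (ee K n i * φ' (Wf φ φ' (FreeMonoid.toList a)))
        = ee K n i * (b • φ' (Wf φ φ' (FreeMonoid.toList a)))
      rw [mul_smul_comm]
  have := key (EA K n x)
  rwa [AlgEquiv.symm_apply_apply] at this

lemma rhoF_g_mul (i : Fin n) (x : FreeAlgebra K (RGen n)) :
    rhoF φ φ' (FreeAlgebra.ι K (RGen.g i) * x)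
      = φ (gg K n i) * φ (rhoF φ φ' x) := by
  have key : ∀ y : MonoidAlgebra K (FreeMonoid (RGen n)),
      rhoF φ φ' (FreeAlgebra.ι K (RGen.g i) * (EA K n).symm y)
        = φ (gg K n i) * φ (rhoF φ φ' ((EA K n).symm y)) := by
    intro y
    induction y using MonoidAlgebra.induction with
    | zero =>
      show rhoF φ φ' (FreeAlgebra.ι K (RGen.g i)
          * (EA K n).symm (0 : MonoidAlgebra K (FreeMonoid (RGen n))))
        = φ (gg K n i) * φ (rhoF φ φ' ((EA K n).symm
            (0 : MonoidAlgebra K (FreeMonoid (RGen n)))))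
      simp
    | single_add a b f _ _ ih =>
      let fM : MonoidAlgebra K (FreeMonoid (RGen n)) := f
      show rhoF φ φ' (FreeAlgebra.ι K (RGen.g i) * (EA K n).symm (sg K n a b + fM))
        = φ (gg K n i) * φ (rhoF φ φ' ((EA K n).symm (sg K n a b + fM)))
      have hsingle : FreeAlgebra.ι K (RGen.g i) * (EA K n).symm (sg K n a b)
          = (EA K n).symm (sg K n (FreeMonoid.of (RGen.g i) * a) b) := by
        have hι : FreeAlgebra.ι K (RGen.g i)
            = (EA K n).symm (sg K n (FreeMonoid.of (RGen.g i)) 1) := by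
          rw [← EA_ι, AlgEquiv.symm_apply_apply]
        rw [hι, ← map_mul, sg_mul, one_mul]
      have htl : FreeMonoid.toList (FreeMonoid.of (RGen.g i) * a)
          = RGen.g i :: FreeMonoid.toList a := rfl
      have hL : rhoF φ φ' (FreeAlgebra.ι K (RGen.g i) * (EA K n).symm (sg K n a b + fM))
          = b • Wf φ φ' (RGen.g i :: FreeMonoid.toList a)
            + rhoF φ φ' (FreeAlgebra.ι K (RGen.g i) * (EA K n).symm fM) := by
        rw [map_add, mul_add, map_add, hsingle, rhoF_sg, htl]
      have hR : φ (rhoF φ φ' ((EA K n).symm (sg K n a b + fM)))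
          = b • φ (Wf φ φ' (FreeMonoid.toList a)) + φ (rhoF φ φ' ((EA K n).symm fM)) := by
        rw [map_add, map_add, rhoF_sg, map_add, map_smul]
      rw [hL, hR, mul_add, ih]
      congr 1
      show b • (φ (gg K n i) * φ (Wf φ φ' (FreeMonoid.toList a)))
        = φ (gg K n i) * (b • φ (Wf φ φ' (FreeMonoid.toList a)))
      rw [mul_smul_comm]
  have := key (EA K n x)
  rwa [AlgEquiv.symm_apply_apply] at this

/-- left-multiplication invariance -/
lemma rhoF_mul_congr {z z' : FreeAlgebra K (RGen n)}
    (h : rhoF φ φ' z = rhoF φ φ' z') (w : FreeAlgebra K (RGen n)) :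
    rhoF φ φ' (w * z) = rhoF φ φ' (w * z') := by
  refine freeAlgebra_induction
    (fun w => rhoF φ φ' (w * z) = rhoF φ φ' (w * z')) ?_ ?_ ?_ ?_ w
  · show rhoF φ φ' (0 * z) = rhoF φ φ' (0 * z')
    rw [zero_mul, zero_mul]
  · intro x y hx hy
    show rhoF φ φ' ((x + y) * z) = rhoF φ φ' ((x + y) * z')
    rw [add_mul, add_mul, map_add, map_add, hx, hy]
  · intro c x hx
    show rhoF φ φ' ((c • x) * z) = rhoF φ φ' ((c • x) * z')
    rw [smul_mul_assoc, smul_mul_assoc, map_smul, map_smul, hx]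
  · intro l
    show rhoF φ φ' (fw K n l * z) = rhoF φ φ' (fw K n l * z')
    induction l with
    | nil =>
      have h1 : fw K n ([] : List (RGen n)) = 1 := rfl
      rw [h1, one_mul, one_mul]; exact h
    | cons c l ih =>
      have hw : fw K n (c :: l) = FreeAlgebra.ι K c * fw K n l := by simp [fw]
      rw [hw, mul_assoc, mul_assoc]
      cases c with
      | e i => rw [rhoF_e_mul, rhoF_e_mul, ih]
      | g i => rw [rhoF_g_mul, rhoF_g_mul, ih]

variable (hinv1 : ∀ x, φ (φ' x) = x) (hinv2 : ∀ x, φ' (φ x) = x)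

include hinv1 hinv2 in
lemma rhoF_rel {a b : FreeAlgebra K (RGen n)}
    (hab : RingQuot.Rel (RoseRel K n) a b) :
    ∀ y, rhoF φ φ' (a * y) = rhoF φ φ' (b * y) := by
  induction hab with
  | of h =>
    intro y
    cases h with
    | ghostEdgeSame i =>
      rw [one_mul, mul_assoc, rhoF_g_mul, rhoF_e_mul, map_mul, ← mul_assoc,
        ← map_mul, lr_ge_same, map_one, one_mul, hinv1]
    | ghostEdgeNe i j hne =>
      rw [zero_mul, map_zero, mul_assoc, rhoF_g_mul, rhoF_e_mul, map_mul,
        ← mul_assoc, ← map_mul, lr_ge_ne hne, map_zero, zero_mul]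
    | ck2 =>
      rw [one_mul, Finset.sum_mul, map_sum]
      have hterm : ∀ i : Fin n,
          rhoF φ φ' (FreeAlgebra.ι K (RGen.e i) * FreeAlgebra.ι K (RGen.g i) * y)
            = ee K n i * (gg K n i * rhoF φ φ' y) := by
        intro i
        rw [mul_assoc, rhoF_e_mul, rhoF_g_mul, map_mul, hinv2, hinv2]
      rw [Finset.sum_congr rfl fun i _ => hterm i]
      have hsum : ∑ i : Fin n, ee K n i * (gg K n i * rhoF φ φ' y)
          = (∑ i : Fin n, ee K n i * gg K n i) * rhoF φ φ' y := by
        rw [Finset.sum_mul]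
        exact Finset.sum_congr rfl fun i _ => (mul_assoc _ _ _).symm
      rw [hsum, lr_ck2, one_mul]
  | add_left _ ih =>
    intro y
    rw [add_mul, add_mul, map_add, map_add, ih y]
  | mul_left _ ih =>
    intro y
    rw [mul_assoc, mul_assoc]; exact ih _
  | mul_right _ ih =>
    intro y
    rw [mul_assoc, mul_assoc]; exact rhoF_mul_congr φ φ' (ih y) _

include hinv1 hinv2 in
lemma rhoF_respects {a b : FreeAlgebra K (RGen n)}
    (hab : RingQuot.Rel (RoseRel K n) a b) : rhoF φ φ' a = rhoF φ φ' b := by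
  have := rhoF_rel φ φ' hinv1 hinv2 hab 1
  rwa [mul_one, mul_one] at this

/-- The inverse map on `LRose`. -/
noncomputable def rho : LRose K n → LRose K n := fun x =>
  Quot.lift (⇑(rhoF φ φ'))
    (fun _ _ hab => rhoF_respects φ φ' hinv1 hinv2 hab) x.toQuot

lemma rho_pi (a : FreeAlgebra K (RGen n)) :
    rho φ φ' hinv1 hinv2 (piR K n a) = rhoF φ φ' a := by
  rw [piR_quot]; rfl

end Aux2

/-- For every `P ∈ GL_n(K)`, the homomorphism
`θ_P : L_K(R_n) → L_K(R_n)^{φ_P}` determined by `θ_P(1) = 1`, `θ_P(e_i) = e_i`,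
`θ_P(e_i*) = Σ_k p_{ik} e_k*` is an isomorphism: the Zhang twist of `L_K(R_n)` by `φ_P`
is isomorphic to `L_K(R_n)`. -/
theorem stmt15 (K : Type) [Field K] (n : ℕ) (hn : 2 ≤ n)
    (P : GL (Fin n) K)
    (φP φP' : LRose K n →ₐ[K] LRose K n)
    (hφP : RPhiProps K n
      (((P : Matrix (Fin n) (Fin n) K)).map (algebraMap K (LRose K n)))
      ((((P⁻¹ : GL (Fin n) K) : Matrix (Fin n) (Fin n) K)).map (algebraMap K (LRose K n))) φP)
    (hφP' : RPhiProps K n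
      ((((P⁻¹ : GL (Fin n) K) : Matrix (Fin n) (Fin n) K)).map (algebraMap K (LRose K n)))
      (((P : Matrix (Fin n) (Fin n) K)).map (algebraMap K (LRose K n))) φP')
    (hinv : ∀ x, φP (φP' x) = x ∧ φP' (φP x) = x)
    (θ : LRose K n →ₗ[K] LRose K n)
    (hone : θ 1 = 1)
    (hmulPos : ∀ m : ℕ, ∀ a ∈ rComponent K n (m : ℤ), ∀ b,
      θ (a * b) = θ a * (⇑φP)^[m] (θ b))
    (hmulNeg : ∀ m : ℕ, ∀ a ∈ rComponent K n (-(m : ℤ)), ∀ b,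
      θ (a * b) = θ a * (⇑φP')^[m] (θ b))
    (hθe : ∀ i, θ (ee K n i) = ee K n i)
    (hθg : ∀ i, θ (gg K n i) =
      ∑ k, algebraMap K (LRose K n) ((P : Matrix (Fin n) (Fin n) K) i k) * gg K n k) :
    Function.Bijective ⇑θ := by
  classical
  have hinv1 : ∀ x, φP (φP' x) = x := fun x => (hinv x).1
  have hinv2 : ∀ x, φP' (φP x) = x := fun x => (hinv x).2
  set pK : Fin n → Fin n → K := fun i j => (P : Matrix (Fin n) (Fin n) K) i j with hpK
  set p'K : Fin n → Fin n → K :=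
    fun i j => ((P⁻¹ : GL (Fin n) K) : Matrix (Fin n) (Fin n) K) i j with hp'K
  -- smul forms of the defining properties
  have hcs : ∀ (c : K) (x : LRose K n), x * algebraMap K (LRose K n) c = c • x := by
    intro c x; rw [← Algebra.commutes, ← Algebra.smul_def]
  have hsc : ∀ (c : K) (x : LRose K n), algebraMap K (LRose K n) c * x = c • x := by
    intro c x; rw [← Algebra.smul_def]
  have hφe : ∀ i, φP (ee K n i) = ∑ k, pK k i • ee K n k := by
    intro i; rw [hφP.1 i]
    exact Finset.sum_congr rfl fun k _ => by rw [Matrix.map_apply, hcs]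
  have hφg : ∀ i, φP (gg K n i) = ∑ k, p'K i k • gg K n k := by
    intro i; rw [hφP.2 i]
    exact Finset.sum_congr rfl fun k _ => by rw [Matrix.map_apply, hsc]
  have hφ'e : ∀ i, φP' (ee K n i) = ∑ k, p'K k i • ee K n k := by
    intro i; rw [hφP'.1 i]
    exact Finset.sum_congr rfl fun k _ => by rw [Matrix.map_apply, hcs]
  have hφ'g : ∀ i, φP' (gg K n i) = ∑ k, pK i k • gg K n k := by
    intro i; rw [hφP'.2 i]
    exact Finset.sum_congr rfl fun k _ => by rw [Matrix.map_apply, hsc]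
  have hθg2 : ∀ i, θ (gg K n i) = φP' (gg K n i) := by
    intro i; rw [hθg i, hφ'g i]
    exact Finset.sum_congr rfl fun k _ => by rw [hsc]
  -- the recursions satisfied by θ
  have mem_e : ∀ i, ee K n i ∈ rComponent K n ((1 : ℕ) : ℤ) := by
    intro i
    apply Submodule.subset_span
    refine ⟨[i], [], by simp, by simp⟩
  have mem_g : ∀ i, gg K n i ∈ rComponent K n (-((1 : ℕ) : ℤ)) := by
    intro i
    apply Submodule.subset_span
    refine ⟨[], [i], by simp, by simp⟩
  have θe : ∀ (i : Fin n) z, θ (ee K n i * z) = ee K n i * φP (θ z) := by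
    intro i z
    have h := hmulPos 1 (ee K n i) (mem_e i) z
    rwa [Function.iterate_one, hθe] at h
  have θg : ∀ (i : Fin n) z, θ (gg K n i * z) = φP' (gg K n i * θ z) := by
    intro i z
    have h := hmulNeg 1 (gg K n i) (mem_g i) z
    rwa [Function.iterate_one, hθg2, ← map_mul] at h
  -- the candidate inverse
  set ρ : LRose K n → LRose K n := rho φP φP' hinv1 hinv2 with hρ
  have ρpi : ∀ a, ρ (piR K n a) = rhoF φP φP' a := rho_pi φP φP' hinv1 hinv2
  have ρ1 : ρ 1 = 1 := by
    calc ρ (1 : LRose K n) = ρ (piR K n 1) := by rw [map_one]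
      _ = rhoF φP φP' 1 := ρpi 1
      _ = 1 := rhoF_one φP φP' 
  have ρe : ∀ (i : Fin n) z, ρ (ee K n i * z) = ee K n i * φP' (ρ z) := by
    intro i z
    obtain ⟨y, rfl⟩ := RingQuot.mkAlgHom_surjective K (RoseRel K n) z
    have h1 : ee K n i * piR K n y = piR K n (FreeAlgebra.ι K (RGen.e i) * y) := by
      rw [map_mul]; rfl
    rw [h1, ρpi, ρpi, rhoF_e_mul]
  have ρg : ∀ (i : Fin n) z, ρ (gg K n i * z) = φP (gg K n i) * φP (ρ z) := by
    intro i z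
    obtain ⟨y, rfl⟩ := RingQuot.mkAlgHom_surjective K (RoseRel K n) z
    have h1 : gg K n i * piR K n y = piR K n (FreeAlgebra.ι K (RGen.g i) * y) := by
      rw [map_mul]; rfl
    rw [h1, ρpi, ρpi, rhoF_g_mul]
  -- ρ as a linear map
  have ρadd : ∀ x y, ρ (x + y) = ρ x + ρ y := by
    intro x y
    obtain ⟨a, rfl⟩ := RingQuot.mkAlgHom_surjective K (RoseRel K n) x
    obtain ⟨b, rfl⟩ := RingQuot.mkAlgHom_surjective K (RoseRel K n) y
    rw [← map_add (piR K n), ρpi, ρpi, ρpi, map_add]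
  have ρsmul : ∀ (c : K) x, ρ (c • x) = c • ρ x := by
    intro c x
    obtain ⟨a, rfl⟩ := RingQuot.mkAlgHom_surjective K (RoseRel K n) x
    rw [← map_smul (piR K n), ρpi, ρpi, map_smul]
  set ρL : LRose K n →ₗ[K] LRose K n :=
    { toFun := ρ, map_add' := ρadd, map_smul' := ρsmul } with hρL
  have ρLapp : ∀ x, ρL x = ρ x := fun _ => rfl
  -- assembling sums of scalar multiples
  have hassem : ∀ (c : Fin n → K) (v : Fin n → LRose K n) (x : LRose K n),
      (∑ k, c k • v k) * x = ∑ k, c k • (v k * x) := by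
    intro c v x
    rw [Finset.sum_mul]
    exact Finset.sum_congr rfl fun k _ => smul_mul_assoc _ _ _
  -- commuting lemmas
  have C1 : ∀ x, θ (φP x) = φP (θ x) := by
    have h : ∀ l : List (RGen n),
        (θ ∘ₗ φP.toLinearMap) (lw K n l) = (φP.toLinearMap ∘ₗ θ) (lw K n l) := by
      intro l
      simp only [LinearMap.comp_apply, AlgHom.toLinearMap_apply]
      induction l with
      | nil => rw [lw_nil, map_one, hone, map_one]
      | cons c l ih =>
        cases c with
        | e i =>
          rw [lw_cons_e]
          calc θ (φP (ee K n i * lw K n l))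
              = θ ((∑ k, pK k i • ee K n k) * φP (lw K n l)) := by rw [map_mul, hφe]
            _ = ∑ k, pK k i • θ (ee K n k * φP (lw K n l)) := by
                rw [hassem, map_sum]; simp only [map_smul]
            _ = ∑ k, pK k i • (ee K n k * φP (θ (φP (lw K n l)))) := by simp only [θe]
            _ = ∑ k, pK k i • (ee K n k * φP (φP (θ (lw K n l)))) := by rw [ih]
            _ = (∑ k, pK k i • ee K n k) * φP (φP (θ (lw K n l))) := by rw [hassem]
            _ = φP (ee K n i) * φP (φP (θ (lw K n l))) := by rw [hφe]
            _ = φP (ee K n i * φP (θ (lw K n l))) := by rw [← map_mul φP]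
            _ = φP (θ (ee K n i * lw K n l)) := by rw [θe]
        | g i =>
          rw [lw_cons_g]
          calc θ (φP (gg K n i * lw K n l))
              = θ ((∑ k, p'K i k • gg K n k) * φP (lw K n l)) := by rw [map_mul, hφg]
            _ = ∑ k, p'K i k • θ (gg K n k * φP (lw K n l)) := by
                rw [hassem, map_sum]; simp only [map_smul]
            _ = ∑ k, p'K i k • φP' (gg K n k * θ (φP (lw K n l))) := by simp only [θg]
            _ = ∑ k, p'K i k • φP' (gg K n k * φP (θ (lw K n l))) := by rw [ih]
            _ = φP' (∑ k, p'K i k • (gg K n k * φP (θ (lw K n l)))) := by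
                rw [map_sum]; simp only [map_smul]
            _ = φP' ((∑ k, p'K i k • gg K n k) * φP (θ (lw K n l))) := by rw [hassem]
            _ = φP' (φP (gg K n i * θ (lw K n l))) := by rw [← hφg, ← map_mul φP]
            _ = gg K n i * θ (lw K n l) := hinv2 _
            _ = φP (φP' (gg K n i * θ (lw K n l))) := (hinv1 _).symm
            _ = φP (θ (gg K n i * lw K n l)) := by rw [← θg]
    intro x
    simpa using lrose_hom_ext (f := θ ∘ₗ φP.toLinearMap) (g := φP.toLinearMap ∘ₗ θ) h x
  have C2 : ∀ x, θ (φP' x) = φP' (θ x) := by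
    have h : ∀ l : List (RGen n),
        (θ ∘ₗ φP'.toLinearMap) (lw K n l) = (φP'.toLinearMap ∘ₗ θ) (lw K n l) := by
      intro l
      simp only [LinearMap.comp_apply, AlgHom.toLinearMap_apply]
      induction l with
      | nil => rw [lw_nil, map_one, hone, map_one]
      | cons c l ih =>
        cases c with
        | e i =>
          rw [lw_cons_e]
          calc θ (φP' (ee K n i * lw K n l))
              = θ ((∑ k, p'K k i • ee K n k) * φP' (lw K n l)) := by rw [map_mul, hφ'e]
            _ = ∑ k, p'K k i • θ (ee K n k * φP' (lw K n l)) := by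
                rw [hassem, map_sum]; simp only [map_smul]
            _ = ∑ k, p'K k i • (ee K n k * φP (θ (φP' (lw K n l)))) := by simp only [θe]
            _ = ∑ k, p'K k i • (ee K n k * φP (φP' (θ (lw K n l)))) := by rw [ih]
            _ = ∑ k, p'K k i • (ee K n k * θ (lw K n l)) := by
                rw [hinv1 (θ (lw K n l))]
            _ = (∑ k, p'K k i • ee K n k) * θ (lw K n l) := by rw [hassem]
            _ = φP' (ee K n i) * φP' (φP (θ (lw K n l))) := by
                rw [hφ'e, hinv2 (θ (lw K n l))]
            _ = φP' (ee K n i * φP (θ (lw K n l))) := by rw [← map_mul φP']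
            _ = φP' (θ (ee K n i * lw K n l)) := by rw [θe]
        | g i =>
          rw [lw_cons_g]
          calc θ (φP' (gg K n i * lw K n l))
              = θ ((∑ k, pK i k • gg K n k) * φP' (lw K n l)) := by rw [map_mul, hφ'g]
            _ = ∑ k, pK i k • θ (gg K n k * φP' (lw K n l)) := by
                rw [hassem, map_sum]; simp only [map_smul]
            _ = ∑ k, pK i k • φP' (gg K n k * θ (φP' (lw K n l))) := by simp only [θg]
            _ = ∑ k, pK i k • φP' (gg K n k * φP' (θ (lw K n l))) := by rw [ih]
            _ = φP' (∑ k, pK i k • (gg K n k * φP' (θ (lw K n l)))) := by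
                rw [map_sum]; simp only [map_smul]
            _ = φP' ((∑ k, pK i k • gg K n k) * φP' (θ (lw K n l))) := by rw [hassem]
            _ = φP' (φP' (gg K n i) * φP' (θ (lw K n l))) := by rw [hφ'g]
            _ = φP' (φP' (gg K n i * θ (lw K n l))) := by rw [← map_mul φP']
            _ = φP' (θ (gg K n i * lw K n l)) := by rw [θg]
    intro x
    simpa using lrose_hom_ext (f := θ ∘ₗ φP'.toLinearMap) (g := φP'.toLinearMap ∘ₗ θ) h x
  have C3 : ∀ x, ρ (φP x) = φP (ρ x) := by
    have h : ∀ l : List (RGen n),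
        (ρL ∘ₗ φP.toLinearMap) (lw K n l) = (φP.toLinearMap ∘ₗ ρL) (lw K n l) := by
      intro l
      simp only [LinearMap.comp_apply, AlgHom.toLinearMap_apply, ρLapp]
      induction l with
      | nil => rw [lw_nil, map_one, ρ1, map_one]
      | cons c l ih =>
        cases c with
        | e i =>
          rw [lw_cons_e]
          calc ρ (φP (ee K n i * lw K n l))
              = ρL ((∑ k, pK k i • ee K n k) * φP (lw K n l)) := by rw [map_mul, hφe]; rfl
            _ = ∑ k, pK k i • ρ (ee K n k * φP (lw K n l)) := by
                rw [hassem, map_sum]; simp only [map_smul]; rfl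
            _ = ∑ k, pK k i • (ee K n k * φP' (ρ (φP (lw K n l)))) := by simp only [ρe]
            _ = ∑ k, pK k i • (ee K n k * φP' (φP (ρ (lw K n l)))) := by rw [ih]
            _ = ∑ k, pK k i • (ee K n k * ρ (lw K n l)) := by rw [hinv2 (ρ (lw K n l))]
            _ = (∑ k, pK k i • ee K n k) * ρ (lw K n l) := by rw [hassem]
            _ = φP (ee K n i) * φP (φP' (ρ (lw K n l))) := by
                rw [hφe, hinv1 (ρ (lw K n l))]
            _ = φP (ee K n i * φP' (ρ (lw K n l))) := by rw [← map_mul φP]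
            _ = φP (ρ (ee K n i * lw K n l)) := by rw [ρe]
        | g i =>
          rw [lw_cons_g]
          calc ρ (φP (gg K n i * lw K n l))
              = ρL ((∑ k, p'K i k • gg K n k) * φP (lw K n l)) := by rw [map_mul, hφg]; rfl
            _ = ∑ k, p'K i k • ρ (gg K n k * φP (lw K n l)) := by
                rw [hassem, map_sum]; simp only [map_smul]; rfl
            _ = ∑ k, p'K i k • (φP (gg K n k) * φP (ρ (φP (lw K n l)))) := by simp only [ρg]
            _ = ∑ k, p'K i k • (φP (gg K n k) * φP (φP (ρ (lw K n l)))) := by rw [ih]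
            _ = φP (∑ k, p'K i k • (gg K n k * φP (ρ (lw K n l)))) := by
                rw [map_sum]; simp only [map_smul, map_mul]
            _ = φP ((∑ k, p'K i k • gg K n k) * φP (ρ (lw K n l))) := by rw [hassem]
            _ = φP (φP (gg K n i) * φP (ρ (lw K n l))) := by rw [hφg]
            _ = φP (ρ (gg K n i * lw K n l)) := by rw [ρg]
    intro x
    simpa [ρLapp] using lrose_hom_ext (f := ρL ∘ₗ φP.toLinearMap) (g := φP.toLinearMap ∘ₗ ρL) h x
  have C4 : ∀ x, ρ (φP' x) = φP' (ρ x) := by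
    have h : ∀ l : List (RGen n),
        (ρL ∘ₗ φP'.toLinearMap) (lw K n l) = (φP'.toLinearMap ∘ₗ ρL) (lw K n l) := by
      intro l
      simp only [LinearMap.comp_apply, AlgHom.toLinearMap_apply, ρLapp]
      induction l with
      | nil => rw [lw_nil, map_one, ρ1, map_one]
      | cons c l ih =>
        cases c with
        | e i =>
          rw [lw_cons_e]
          calc ρ (φP' (ee K n i * lw K n l))
              = ρL ((∑ k, p'K k i • ee K n k) * φP' (lw K n l)) := by rw [map_mul, hφ'e]; rfl
            _ = ∑ k, p'K k i • ρ (ee K n k * φP' (lw K n l)) := by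
                rw [hassem, map_sum]; simp only [map_smul]; rfl
            _ = ∑ k, p'K k i • (ee K n k * φP' (ρ (φP' (lw K n l)))) := by simp only [ρe]
            _ = ∑ k, p'K k i • (ee K n k * φP' (φP' (ρ (lw K n l)))) := by rw [ih]
            _ = (∑ k, p'K k i • ee K n k) * φP' (φP' (ρ (lw K n l))) := by rw [hassem]
            _ = φP' (ee K n i) * φP' (φP' (ρ (lw K n l))) := by rw [hφ'e]
            _ = φP' (ee K n i * φP' (ρ (lw K n l))) := by rw [← map_mul φP']
            _ = φP' (ρ (ee K n i * lw K n l)) := by rw [ρe]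
        | g i =>
          rw [lw_cons_g]
          calc ρ (φP' (gg K n i * lw K n l))
              = ρL ((∑ k, pK i k • gg K n k) * φP' (lw K n l)) := by rw [map_mul, hφ'g]; rfl
            _ = ∑ k, pK i k • ρ (gg K n k * φP' (lw K n l)) := by
                rw [hassem, map_sum]; simp only [map_smul]; rfl
            _ = ∑ k, pK i k • (φP (gg K n k) * φP (ρ (φP' (lw K n l)))) := by simp only [ρg]
            _ = ∑ k, pK i k • (φP (gg K n k) * φP (φP' (ρ (lw K n l)))) := by rw [ih]
            _ = ∑ k, pK i k • (φP (gg K n k) * ρ (lw K n l)) := by rw [hinv1 (ρ (lw K n l))]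
            _ = (∑ k, pK i k • φP (gg K n k)) * ρ (lw K n l) := by rw [hassem]
            _ = φP (∑ k, pK i k • gg K n k) * ρ (lw K n l) := by
                rw [map_sum]; simp only [map_smul]
            _ = φP (φP' (gg K n i)) * ρ (lw K n l) := by rw [hφ'g]
            _ = gg K n i * ρ (lw K n l) := by rw [hinv1]
            _ = φP' (φP (gg K n i * ρ (lw K n l))) := (hinv2 _).symm
            _ = φP' (φP (gg K n i) * φP (ρ (lw K n l))) := by rw [map_mul φP]
            _ = φP' (ρ (gg K n i * lw K n l)) := by rw [ρg]
    intro x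
    simpa [ρLapp] using lrose_hom_ext (f := ρL ∘ₗ φP'.toLinearMap) (g := φP'.toLinearMap ∘ₗ ρL) h x
  -- left and right inverse
  have R1 : ∀ x, ρ (θ x) = x := by
    have h : ∀ l : List (RGen n),
        (ρL ∘ₗ θ) (lw K n l) = (LinearMap.id : LRose K n →ₗ[K] LRose K n) (lw K n l) := by
      intro l
      simp only [LinearMap.comp_apply, LinearMap.id_apply, ρLapp]
      induction l with
      | nil => rw [lw_nil, hone, ρ1]
      | cons c l ih =>
        cases c with
        | e i =>
          rw [lw_cons_e]
          calc ρ (θ (ee K n i * lw K n l))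
              = ρ (ee K n i * φP (θ (lw K n l))) := by rw [θe]
            _ = ee K n i * φP' (ρ (φP (θ (lw K n l)))) := by rw [ρe]
            _ = ee K n i * φP' (φP (ρ (θ (lw K n l)))) := by rw [C3]
            _ = ee K n i * ρ (θ (lw K n l)) := by rw [hinv2]
            _ = ee K n i * lw K n l := by rw [ih]
        | g i =>
          rw [lw_cons_g]
          calc ρ (θ (gg K n i * lw K n l))
              = ρ (φP' (gg K n i * θ (lw K n l))) := by rw [θg]
            _ = φP' (ρ (gg K n i * θ (lw K n l))) := by rw [C4]
            _ = φP' (φP (gg K n i) * φP (ρ (θ (lw K n l)))) := by rw [ρg]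
            _ = φP' (φP (gg K n i * ρ (θ (lw K n l)))) := by rw [← map_mul φP]
            _ = gg K n i * ρ (θ (lw K n l)) := hinv2 _
            _ = gg K n i * lw K n l := by rw [ih]
    intro x
    simpa [ρLapp] using lrose_hom_ext (f := ρL ∘ₗ θ) (g := LinearMap.id) h x
  have R2 : ∀ x, θ (ρ x) = x := by
    have h : ∀ l : List (RGen n),
        (θ ∘ₗ ρL) (lw K n l) = (LinearMap.id : LRose K n →ₗ[K] LRose K n) (lw K n l) := by
      intro l
      simp only [LinearMap.comp_apply, LinearMap.id_apply, ρLapp]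
      induction l with
      | nil => rw [lw_nil, ρ1, hone]
      | cons c l ih =>
        cases c with
        | e i =>
          rw [lw_cons_e]
          calc θ (ρ (ee K n i * lw K n l))
              = θ (ee K n i * φP' (ρ (lw K n l))) := by rw [ρe]
            _ = ee K n i * φP (θ (φP' (ρ (lw K n l)))) := by rw [θe]
            _ = ee K n i * φP (φP' (θ (ρ (lw K n l)))) := by rw [C2]
            _ = ee K n i * θ (ρ (lw K n l)) := by rw [hinv1]
            _ = ee K n i * lw K n l := by rw [ih]
        | g i =>
          rw [lw_cons_g]
          calc θ (ρ (gg K n i * lw K n l))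
              = θ (φP (gg K n i) * φP (ρ (lw K n l))) := by rw [ρg]
            _ = θ (φP (gg K n i * ρ (lw K n l))) := by rw [← map_mul φP]
            _ = φP (θ (gg K n i * ρ (lw K n l))) := by rw [C1]
            _ = φP (φP' (gg K n i * θ (ρ (lw K n l)))) := by rw [θg]
            _ = gg K n i * θ (ρ (lw K n l)) := hinv1 _
            _ = gg K n i * lw K n l := by rw [ih]
    intro x
    simpa [ρLapp] using lrose_hom_ext (f := θ ∘ₗ ρL) (g := LinearMap.id) h x
  exact ⟨Function.LeftInverse.injective R1, Function.RightInverse.surjective R2⟩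
end
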